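/- arXiv:0808.0090 — 2 statements merged into one kernel-verified Lean document; each statement's English description precedes it below -/
import Mathlib

section
/- Let X̃ = S(1,…,1,2) ⊆ P^{2n} be the smooth rational normal scroll of type (1,…,1,2) (n−1 ones and one 2) with n ≥ 2, and let p ∈ P^{2n} \ X̃ be a closed point. Then dim Σ_p(X̃) ≥ 1. -/
/-!
Common framework: projective space over an algebraically closed field, linear
subspaces, Zariski closure, tangent spaces, secant cones and secant loci,
rational normal scrolls (possibly cones) and their distinguished subvarieties.
-/

open Projectivization MvPolynomial

noncomputable section

namespace SecantLoci

/-- Projective `N`-space over `K`, with homogeneous coordinates indexed by `Fin (N+1)`. -/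
abbrev PS (K : Type*) [Field K] (N : ℕ) := Projectivization K (Fin (N + 1) → K)

variable {K : Type*} [Field K] {N : ℕ}

/-- The affine cone over a set of projective points (it contains `0`). -/
def cone (S : Set (PS K N)) : Set (Fin (N + 1) → K) :=
  { v | ∀ hv : v ≠ 0, Projectivization.mk K v hv ∈ S }

/-- The set of projective points lying in the projectivization of a linear subspace `W`. -/
def linSet (W : Submodule K (Fin (N + 1) → K)) : Set (PS K N) :=
  { x | x.submodule ≤ W }

/-- `S` is a projective linear subspace of (projective) dimension `d`. -/
def IsLinearOfDim (S : Set (PS K N)) (d : ℕ) : Prop :=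
  ∃ W : Submodule K (Fin (N + 1) → K), Module.finrank K W = d + 1 ∧ S = linSet W

/-- The projective linear span of a set of projective points. -/
def projSpan (S : Set (PS K N)) : Set (PS K N) :=
  linSet (⨆ x ∈ S, x.submodule)

/-- The line through two points (the span of the pair). -/
def lineThrough (p q : PS K N) : Set (PS K N) := projSpan {p, q}

def IsLine (S : Set (PS K N)) : Prop := IsLinearOfDim S 1

def IsPlane (S : Set (PS K N)) : Prop := IsLinearOfDim S 2

/-- The polynomials vanishing on the affine cone over `S`. -/
def vanishing (S : Set (PS K N)) : Set (MvPolynomial (Fin (N + 1)) K) :=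
  { f | ∀ v ∈ cone S, eval v f = 0 }

/-- The Zariski closure of a set of projective points. -/
def zcl (S : Set (PS K N)) : Set (PS K N) :=
  { x | ∀ f ∈ vanishing S, eval x.rep f = 0 }

def IsZClosed (S : Set (PS K N)) : Prop := zcl S = S

/-- Irreducibility with respect to Zariski closed sets. -/
def IsIrred (S : Set (PS K N)) : Prop :=
  S.Nonempty ∧ ∀ A B : Set (PS K N),
    IsZClosed A → IsZClosed B → S ⊆ A ∪ B → S ⊆ A ∨ S ⊆ B

/-- `dimGE S k` : the (Zariski) dimension of `S` is at least `k`, i.e. there is a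
strictly increasing chain of `k+1` nonempty irreducible closed subsets of the closure of `S`. -/
def dimGE (S : Set (PS K N)) (k : ℕ) : Prop :=
  ∃ c : Fin (k + 1) → Set (PS K N), StrictMono c ∧
    (∀ i, IsZClosed (c i) ∧ IsIrred (c i)) ∧ c (Fin.last k) ⊆ zcl S

/-- The embedded join of two sets: the Zariski closure of the union of all lines
joining a point of `Y` to a point of `Z` (together with `Y` and `Z` themselves). -/
def join (Y Z : Set (PS K N)) : Set (PS K N) :=
  zcl (Y ∪ Z ∪ ⋃ y ∈ Y, ⋃ z ∈ Z, lineThrough y z)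

/-- The (projective) Zariski tangent space of `X` at `q`: the projectivization of the
kernel of the linear parts at `q` of all polynomials vanishing on the cone over `X`. -/
def tangentSpace (X : Set (PS K N)) (q : PS K N) : Set (PS K N) :=
  { x | ∀ f ∈ vanishing X, ∑ i, x.rep i * eval q.rep (pderiv i f) = 0 }

/-- A line `L` is a secant line of `X` when it meets `X` in a scheme of length at least 2:
equivalently, it meets `X` in two distinct points, or it is tangent to `X` at some point. -/
def IsSecantLine (X L : Set (PS K N)) : Prop :=
  IsLine L ∧
    ((∃ x ∈ X ∩ L, ∃ y ∈ X ∩ L, x ≠ y) ∨ ∃ q ∈ X ∩ L, L ⊆ tangentSpace X q)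

/-- The secant cone `Sec_p(X)`: the union of all secant lines of `X` through `p`
(just `{p}` if there is no such line). -/
def secCone (X : Set (PS K N)) (p : PS K N) : Set (PS K N) :=
  {p} ∪ ⋃ L ∈ { L | IsSecantLine X L ∧ p ∈ L }, L

/-- The secant locus `Σ_p(X)` (as a set: the support of the scheme-theoretic
intersection of `X` with the secant cone). -/
def secLocus (X : Set (PS K N)) (p : PS K N) : Set (PS K N) :=
  X ∩ secCone X p

/-- The secant variety: the Zariski closure of the union of all chords of `X`. -/
def secVariety (X : Set (PS K N)) : Set (PS K N) :=
  zcl (⋃ x ∈ X, ⋃ y ∈ X, ⋃ _ : x ≠ y, lineThrough x y)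

/-- The tangent variety: the Zariski closure of the union of all tangent spaces of `X`. -/
def tanVariety (X : Set (PS K N)) : Set (PS K N) :=
  zcl (⋃ q ∈ X, tangentSpace X q)

/-- `S` is a smooth plane conic: the image of `ℙ¹` under a degree-2 Veronese map into
the plane spanned by three linearly independent vectors. -/
def IsSmoothConic (S : Set (PS K N)) : Prop :=
  ∃ v : Fin 3 → (Fin (N + 1) → K), LinearIndependent K v ∧
    S = { x | ∃ s t : K, (s, t) ≠ (0, 0) ∧
      x.submodule = Submodule.span K {s ^ 2 • v 0 + (s * t) • v 1 + t ^ 2 • v 2} }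

/-- `S` is a smooth quadric surface (in the 3-space spanned by four independent vectors):
the image of `ℙ¹ × ℙ¹` under a Segre map. -/
def IsSmoothQuadricSurface (S : Set (PS K N)) : Prop :=
  ∃ v : Fin 2 → Fin 2 → (Fin (N + 1) → K),
    LinearIndependent K (fun q : Fin 2 × Fin 2 => v q.1 q.2) ∧
    S = { x | ∃ b c : Fin 2 → K, b ≠ 0 ∧ c ≠ 0 ∧
      x.submodule = Submodule.span K {∑ i, ∑ j, (b i * c j) • v i j} }

/-- The data of a smooth rational normal scroll of type `(a 0, …, a (n-1))` in `ℙ^N`: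
a family of linearly independent vectors `v i j`, `0 ≤ j ≤ a i`, giving the rational
normal curve directrices of the scroll. -/
structure ScrollData (K : Type*) [Field K] (N n : ℕ) (a : Fin n → ℕ) where
  v : (i : Fin n) → Fin (a i + 1) → (Fin (N + 1) → K)
  indep : LinearIndependent K fun q : (i : Fin n) × Fin (a i + 1) => v q.1 q.2

namespace ScrollData

variable {n : ℕ} {a : Fin n → ℕ}

/-- The point of the `i`-th directrix curve over the parameter `(s : t) ∈ ℙ¹`. -/
def w (D : ScrollData K N n a) (i : Fin n) (s t : K) : Fin (N + 1) → K :=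
  ∑ j : Fin (a i + 1), (s ^ (a i - (j : ℕ)) * t ^ (j : ℕ)) • D.v i j

/-- The ruling of the scroll over the parameter `(s : t) ∈ ℙ¹`:
the linear span of the points of the directrix curves over `(s : t)`. -/
def ruling (D : ScrollData K N n a) (s t : K) : Set (PS K N) :=
  linSet (Submodule.span K (Set.range fun i => D.w i s t))

/-- The scroll itself: the union of its rulings. -/
def carrier (D : ScrollData K N n a) : Set (PS K N) :=
  ⋃ (s : K) (t : K) (_ : (s, t) ≠ (0, 0)), D.ruling s t

/-- A line section of the scroll: a line contained in the scroll meeting each ruling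
in exactly one point (a section of the scroll map `φ`). -/
def IsLineSection (D : ScrollData K N n a) (L : Set (PS K N)) : Prop :=
  IsLine L ∧ L ⊆ D.carrier ∧
    ∀ s t : K, (s, t) ≠ (0, 0) → ∃! x, x ∈ L ∩ D.ruling s t

/-- The subscroll `S(1̲)` swept out by the line sections, i.e. the subscroll
corresponding to the indices with `a i = 1`. -/
def sub1 (D : ScrollData K N n a) : Set (PS K N) :=
  ⋃ (s : K) (t : K) (_ : (s, t) ≠ (0, 0)),
    linSet (Submodule.span K
      (Set.range fun i : { i : Fin n // a i = 1 } => D.w i.1 s t))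

/-- The subscroll `S(2̲)` corresponding to the indices with `a i = 2`. -/
def sub2 (D : ScrollData K N n a) : Set (PS K N) :=
  ⋃ (s : K) (t : K) (_ : (s, t) ≠ (0, 0)),
    linSet (Submodule.span K
      (Set.range fun i : { i : Fin n // a i = 2 } => D.w i.1 s t))

/-- The Segre variety `Δ = ⋃_β ⟨C_β⟩ ≅ ℙ² × ℙ^{m-k-1}`: the union of the planes of
the conic sections `C_β` of the subscroll `S(2̲)`. -/
def delta (D : ScrollData K N n a) : Set (PS K N) :=
  ⋃ (β : { i : Fin n // a i = 2 } → K) (_ : β ≠ 0),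
    linSet (Submodule.span K (Set.range fun j : Fin 3 =>
      ∑ i : { i : Fin n // a i = 2 }, β i •
        D.v i.1 ⟨(j : ℕ), by have h1 := i.2; have h2 := j.isLt; omega⟩))

end ScrollData

/-- The data of a (possibly singular) rational normal scroll in `ℙ^N` with vertex of
projective dimension `hv - 1` (empty vertex when `hv = 0`, i.e. a smooth scroll):
a cone over the smooth rational normal scroll `base`, with vertex spanned by the
vectors `zv`, the whole configuration being linearly independent and spanning `ℙ^N`. -/
structure ConeScroll (K : Type*) [Field K] (N n : ℕ) (a : Fin n → ℕ) (hv : ℕ) where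
  zv : Fin hv → (Fin (N + 1) → K)
  base : ScrollData K N n a
  indep : LinearIndependent K
    (Sum.elim zv fun q : (i : Fin n) × Fin (a i + 1) => base.v q.1 q.2)
  total : N + 1 = hv + ∑ i, (a i + 1)

namespace ConeScroll

variable {n hv : ℕ} {a : Fin n → ℕ}

/-- The vertex `Vert(X̃)` of the cone. -/
def vertex (C : ConeScroll K N n a hv) : Set (PS K N) :=
  linSet (Submodule.span K (Set.range C.zv))

/-- The linear span `⟨X̃₀⟩` of the smooth base scroll. -/
def baseSpan (C : ConeScroll K N n a hv) : Set (PS K N) :=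
  projSpan C.base.carrier

/-- The scroll `X̃ = Join(Vert(X̃), X̃₀)` itself. -/
def carrier (C : ConeScroll K N n a hv) : Set (PS K N) :=
  join C.vertex C.base.carrier

/-- `Σ_p(X̃) = 2·Vert(X̃)`: the secant locus is (set-theoretically) the vertex,
with double structure. -/
def SLempty (C : ConeScroll K N n a hv) (p : PS K N) : Prop :=
  secLocus C.carrier p = C.vertex

/-- `Σ_p(X̃) = Join(Vert(X̃), {x, y})` for two distinct points `x, y` of `⟨X̃₀⟩`. -/
def SLpair (C : ConeScroll K N n a hv) (p : PS K N) : Prop :=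
  ∃ x y : PS K N, x ∈ C.baseSpan ∧ y ∈ C.baseSpan ∧ x ≠ y ∧
    secLocus C.carrier p = join C.vertex {x, y}

/-- `Σ_p(X̃) = 2⟨Vert(X̃), x⟩` for a point `x` of a line `L ⊆ ⟨X̃₀⟩`. -/
def SLdouble (C : ConeScroll K N n a hv) (p : PS K N) : Prop :=
  ∃ L : Set (PS K N), IsLine L ∧ L ⊆ C.baseSpan ∧ ∃ x ∈ L,
    secLocus C.carrier p = projSpan (C.vertex ∪ {x})

/-- `Σ_p(X̃) = Join(Vert(X̃), L ∪ L')` for two distinct coplanar lines `L, L' ⊆ ⟨X̃₀⟩`. -/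
def SLlines (C : ConeScroll K N n a hv) (p : PS K N) : Prop :=
  ∃ L L' : Set (PS K N), IsLine L ∧ IsLine L' ∧ L ≠ L' ∧
    (∃ Pl : Set (PS K N), IsPlane Pl ∧ L ⊆ Pl ∧ L' ⊆ Pl) ∧
    L ⊆ C.baseSpan ∧ L' ⊆ C.baseSpan ∧
    secLocus C.carrier p = join C.vertex (L ∪ L')

/-- `Σ_p(X̃) = Join(Vert(X̃), V)` for a smooth plane conic `V ⊆ ⟨X̃₀⟩`. -/
def SLconic (C : ConeScroll K N n a hv) (p : PS K N) : Prop :=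
  ∃ V : Set (PS K N), IsSmoothConic V ∧ V ⊆ C.baseSpan ∧
    secLocus C.carrier p = join C.vertex V

/-- `Σ_p(X̃) = Join(Vert(X̃), W)` for a smooth quadric surface `W ⊆ ⟨X̃₀⟩`. -/
def SLquadric (C : ConeScroll K N n a hv) (p : PS K N) : Prop :=
  ∃ W : Set (PS K N), IsSmoothQuadricSurface W ∧ W ⊆ C.baseSpan ∧
    secLocus C.carrier p = join C.vertex W

end ConeScroll

/-- The homogeneous vanishing ideal of a set of projective points. -/
def vanishingIdeal (S : Set (PS K N)) : Ideal (MvPolynomial (Fin (N + 1)) K) where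
  carrier := vanishing S
  add_mem' := by
    intro f g hf hg v hv
    simp [map_add, hf v hv, hg v hv]
  zero_mem' := by intro v hv; simp
  smul_mem' := by
    intro c f hf v hv
    simp [smul_eq_mul, hf v hv]

/-- `rs` is a regular sequence on `R/I` (expressed without passing to the quotient):
the sequence stays proper modulo `I` and each entry is a nonzerodivisor modulo
`I` together with the previous entries. -/
def IsRegModulo {R : Type*} [CommRing R] (I : Ideal R) (rs : List R) : Prop :=
  (I ⊔ Ideal.span { x | x ∈ rs } ≠ ⊤) ∧
  ∀ (i : ℕ) (h : i < rs.length) (y : R),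
    rs.get ⟨i, h⟩ * y ∈ I ⊔ Ideal.span { x | x ∈ rs.take i } →
    y ∈ I ⊔ Ideal.span { x | x ∈ rs.take i }

/-- `S ⊆ ℙ^N` is arithmetically Cohen–Macaulay: its homogeneous coordinate ring
admits a regular sequence, inside the irrelevant maximal ideal, of length equal to
its Krull dimension. -/
def IsACM (S : Set (PS K N)) : Prop :=
  ∃ rs : List (MvPolynomial (Fin (N + 1)) K),
    (∀ f ∈ rs, f ∈ Ideal.span
      (Set.range (MvPolynomial.X : Fin (N + 1) → MvPolynomial (Fin (N + 1)) K))) ∧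
    IsRegModulo (vanishingIdeal S) rs ∧
    ((rs.length : ℕ∞) : WithBot ℕ∞) =
      ringKrullDim (MvPolynomial (Fin (N + 1)) K ⧸ vanishingIdeal S)

/-- The image of a subset of `ℙ^N` under the linear projection induced by a linear
map `T` on homogeneous coordinates. -/
def projImage {M : ℕ} (T : (Fin (N + 1) → K) →ₗ[K] (Fin (M + 1) → K))
    (X : Set (PS K N)) : Set (PS K M) :=
  { y | ∃ x ∈ X, y.submodule = Submodule.map T x.submodule }

end SecantLoci

/-! ## Statement 10 (Lemma 4.3(4)): secant loci of `S(1,…,1,2) ⊆ ℙ^{2n}` -/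

namespace SecantLoci



section P1
variable {K : Type*} [Field K] {N : ℕ}
/-! ### part 1 -/

lemma eval_scale (c : K) (f : MvPolynomial (Fin (N+1)) K) (w : Fin (N+1) → K) :
    eval w (aeval (fun i => (C c * X i : MvPolynomial (Fin (N+1)) K)) f) = eval (c • w) f := by
  induction f using MvPolynomial.induction_on with
  | C a => simp
  | add p q hp hq => simp only [map_add, hp, hq]
  | mul_X p i hp =>
      rw [map_mul, aeval_X]
      simp only [eval_mul, eval_C, eval_X, hp, Pi.smul_apply, smul_eq_mul]

lemma zero_mem_cone (S : Set (PS K N)) : (0 : Fin (N+1) → K) ∈ cone S := by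
  intro hv; exact absurd rfl hv

lemma smul_mem_cone {S : Set (PS K N)} {v : Fin (N+1) → K} (c : K) (hv : v ∈ cone S) :
    c • v ∈ cone S := by
  intro hcv
  have hc : c ≠ 0 := by rintro rfl; simp at hcv
  have hv0 : v ≠ 0 := by
    rintro rfl; exact hcv (smul_zero c)
  have : Projectivization.mk K (c • v) hcv = Projectivization.mk K v hv0 := by
    rw [Projectivization.mk_eq_mk_iff]
    exact ⟨Units.mk0 c hc, rfl⟩
  rw [this]; exact hv hv0

lemma rep_mem_cone {S : Set (PS K N)} {x : PS K N} (hx : x ∈ S) : x.rep ∈ cone S := by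
  intro hv
  rw [Projectivization.mk_rep]; exact hx

lemma subset_zcl (S : Set (PS K N)) : S ⊆ zcl S := by
  intro x hx f hf
  exact hf _ (rep_mem_cone hx)

lemma zcl_subset_of_vanishing {S B : Set (PS K N)} (h : vanishing B ⊆ vanishing S) :
    zcl S ⊆ zcl B := fun x hx f hf => hx f (h hf)

lemma vanishing_antitone {S T : Set (PS K N)} (h : S ⊆ T) : vanishing T ⊆ vanishing S := by
  intro f hf v hv
  exact hf v (fun h0 => h (hv h0))

lemma zcl_mono {S T : Set (PS K N)} (h : S ⊆ T) : zcl S ⊆ zcl T :=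
  zcl_subset_of_vanishing (vanishing_antitone h)

lemma vanishing_subset_vanishing_zcl (S : Set (PS K N)) :
    vanishing S ⊆ vanishing (zcl S) := by
  intro f hf v hv
  by_cases h0 : v = 0
  · subst h0
    exact hf 0 (zero_mem_cone S)
  · have hx : Projectivization.mk K v h0 ∈ zcl S := hv h0
    obtain ⟨c, hc⟩ := Projectivization.exists_smul_eq_mk_rep K v h0
    set g : MvPolynomial (Fin (N+1)) K :=
      aeval (fun i => (C ((c⁻¹ : Kˣ) : K) * X i : MvPolynomial (Fin (N+1)) K)) f with hg
    have hgS : g ∈ vanishing S := by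
      intro w hw
      rw [hg, eval_scale]
      exact hf _ (smul_mem_cone _ hw)
    have h2 := hx g hgS
    rw [Units.smul_def] at hc
    rw [hg, eval_scale, ← hc, smul_smul] at h2
    simpa using h2

lemma isZClosed_zcl (S : Set (PS K N)) : IsZClosed (zcl S) := by
  refine Set.Subset.antisymm ?_ (subset_zcl _)
  exact zcl_subset_of_vanishing (vanishing_subset_vanishing_zcl S)

/-- everything in `cone {x}` is a multiple of `x.rep`. -/
lemma cone_singleton_sub {x : PS K N} {v : Fin (N+1) → K} (hv : v ∈ cone {x}) :
    ∃ c : K, v = c • x.rep := by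
  by_cases h0 : v = 0
  · exact ⟨0, by simp [h0]⟩
  · have : Projectivization.mk K v h0 = x := hv h0
    rw [← Projectivization.mk_rep x, Projectivization.mk_eq_mk_iff] at this
    obtain ⟨a, ha⟩ := this
    exact ⟨a, ha.symm⟩

lemma zcl_singleton (x : PS K N) : zcl ({x} : Set (PS K N)) = {x} := by
  refine Set.Subset.antisymm ?_ (subset_zcl _)
  intro y hy
  -- linear forms u_k X_j - u_j X_k vanish on the cone over {x}
  set u := x.rep with hu
  have key : ∀ j k : Fin (N+1), y.rep j * u k = y.rep k * u j := by
    intro j k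
    have hf : (C (u k) * X j - C (u j) * X k : MvPolynomial (Fin (N+1)) K) ∈ vanishing {x} := by
      intro v hv
      obtain ⟨c, rfl⟩ := cone_singleton_sub hv
      simp only [map_sub, eval_mul, eval_C, eval_X, Pi.smul_apply, smul_eq_mul]
      ring
    have := hy _ hf
    simp only [map_sub, eval_mul, eval_C, eval_X] at this
    linear_combination this
  -- pick a nonzero coordinate of u
  have hu0 : u ≠ 0 := x.rep_nonzero
  obtain ⟨k, hk⟩ : ∃ k, u k ≠ 0 := by
    by_contra h
    push_neg at h
    exact hu0 (funext h)
  have hrep : y.rep = (y.rep k * (u k)⁻¹) • u := by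
    funext j
    have h := key j k
    simp only [Pi.smul_apply, smul_eq_mul]
    field_simp
    linear_combination h
  have hc0 : y.rep k * (u k)⁻¹ ≠ 0 := by
    intro h
    exact y.rep_nonzero (by rw [hrep, h, zero_smul])
  have : y = x := by
    rw [← Projectivization.mk_rep y, ← Projectivization.mk_rep x,
      Projectivization.mk_eq_mk_iff]
    refine ⟨Units.mk0 _ hc0, ?_⟩
    rw [Units.smul_def]
    exact hrep.symm
  simp [this]

lemma isIrred_singleton (x : PS K N) : IsIrred ({x} : Set (PS K N)) := by
  refine ⟨⟨x, rfl⟩, ?_⟩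
  intro A B _ _ h
  rcases h rfl with h | h
  · exact Or.inl (by simpa using h)
  · exact Or.inr (by simpa using h)



end P1

section Curve

variable {K : Type*} [Field K] {N : ℕ}

lemma ringhom_aeval {R : Type*} [CommRing R] [Algebra K R] (φ : R →+* K)
    (hφ : ∀ r : K, φ (algebraMap K R r) = r) (g : Fin (N+1) → R)
    (f : MvPolynomial (Fin (N+1)) K) :
    φ (aeval g f) = eval (fun i => φ (g i)) f := by
  induction f using MvPolynomial.induction_on with
  | C a => simpa using hφ a
  | add p q hp hq => simp only [map_add, hp, hq]
  | mul_X p i hp => rw [map_mul, aeval_X, map_mul, hp, eval_mul, eval_X]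

/-- The point of the curve at parameter `lam`. -/
def cvec (Γ : Fin (N+1) → Polynomial K) (lam : K) : Fin (N+1) → K :=
  fun k => (Γ k).eval lam

open Polynomial in
lemma biv_eval (Γ : Fin (N+1) → Polynomial K) (f : MvPolynomial (Fin (N+1)) K) (μ lam : K) :
    Polynomial.eval lam (Polynomial.eval (Polynomial.C μ)
      (MvPolynomial.aeval (fun k => (Polynomial.C (Γ k) * Polynomial.X :
        Polynomial (Polynomial K))) f)) =
    MvPolynomial.eval (μ • cvec Γ lam) f := by
  have := ringhom_aeval (R := Polynomial (Polynomial K))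
    ((Polynomial.evalRingHom lam).comp (Polynomial.evalRingHom (Polynomial.C μ)))
    (by intro r; simp [Polynomial.algebraMap_apply])
    (fun k => (Polynomial.C (Γ k) * Polynomial.X : Polynomial (Polynomial K))) f
  simp only [RingHom.comp_apply, Polynomial.coe_evalRingHom] at this
  rw [this]
  have hg : (fun i => Polynomial.eval lam (Polynomial.eval (Polynomial.C μ)
      (Polynomial.C (Γ i) * Polynomial.X))) = μ • cvec Γ lam := by
    funext k
    rw [Polynomial.eval_mul, Polynomial.eval_C, Polynomial.eval_X, Polynomial.eval_mul,
      Polynomial.eval_C]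
    show Polynomial.eval lam (Γ k) * μ = μ * cvec Γ lam k
    rw [cvec, mul_comm]
  rw [hg]

variable [Infinite K]

lemma curve_zcl_subset {Γ : Fin (N+1) → Polynomial K} {G : Set K} {B : Set (PS K N)}
    (hB : IsZClosed B)
    (hne : ∀ lam ∈ G, cvec Γ lam ≠ 0)
    (hinf : {lam : K | ∃ h : lam ∈ G,
      Projectivization.mk K (cvec Γ lam) (hne lam h) ∈ B}.Infinite) :
    zcl {x | ∃ lam, ∃ h : lam ∈ G, x = Projectivization.mk K (cvec Γ lam) (hne lam h)} ⊆ B := by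
  set T := {x | ∃ lam, ∃ h : lam ∈ G, x = Projectivization.mk K (cvec Γ lam) (hne lam h)} with hT
  rw [← hB]
  apply zcl_subset_of_vanishing
  intro f hf
  set h : Polynomial (Polynomial K) :=
    MvPolynomial.aeval (fun k => (Polynomial.C (Γ k) * Polynomial.X :
      Polynomial (Polynomial K))) f with hdef
  -- the bivariate polynomial vanishes identically
  have hzero : h = 0 := by
    apply Polynomial.ext
    intro j
    rw [Polynomial.coeff_zero]
    have : ∀ lam : K, lam ∈ {lam : K | ∃ h : lam ∈ G,
        Projectivization.mk K (cvec Γ lam) (hne lam h) ∈ B} →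
        Polynomial.IsRoot (h.coeff j) lam := by
      intro lam hlam
      obtain ⟨hG, hBmem⟩ := hlam
      have hmap : Polynomial.map (Polynomial.evalRingHom lam) h = 0 := by
        apply Polynomial.funext
        intro μ
        rw [Polynomial.eval_map, Polynomial.eval_zero]
        have h1 : Polynomial.eval₂ (Polynomial.evalRingHom lam) μ h =
            Polynomial.eval lam (Polynomial.eval (Polynomial.C μ) h) := by
          rw [show Polynomial.eval lam (Polynomial.eval (Polynomial.C μ) h) =
              (Polynomial.evalRingHom lam) (Polynomial.eval₂ (RingHom.id _)
                (Polynomial.C μ) h) from rfl]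
          rw [Polynomial.hom_eval₂]
          simp
        rw [h1, biv_eval]
        apply hf
        apply smul_mem_cone
        intro h0'
        exact hBmem
      have := congrArg (fun q => Polynomial.coeff q j) hmap
      simpa [Polynomial.coeff_map] using this
    have hsub : {lam : K | ∃ h : lam ∈ G,
        Projectivization.mk K (cvec Γ lam) (hne lam h) ∈ B} ⊆
        {x | Polynomial.IsRoot (h.coeff j) x} := fun lam hlam => this lam hlam
    by_contra hne0
    exact (Polynomial.finite_setOf_isRoot hne0).not_infinite (hinf.mono hsub)
  -- now conclude f vanishes on the cone over T
  intro v hv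
  by_cases h0 : v = 0
  · subst h0; exact hf 0 (zero_mem_cone B)
  · obtain ⟨lam0, hG0, hmk⟩ := hv h0
    rw [Projectivization.mk_eq_mk_iff] at hmk
    obtain ⟨c, hc⟩ := hmk
    rw [Units.smul_def] at hc
    have := biv_eval Γ f (c : K) lam0
    rw [← hdef, hzero] at this
    simp only [Polynomial.eval_zero] at this
    rw [hc] at this
    exact this.symm

lemma isIrred_zcl_curve {Γ : Fin (N+1) → Polynomial K} {G : Set K}
    (hne : ∀ lam ∈ G, cvec Γ lam ≠ 0) (hGinf : G.Infinite) :
    IsIrred (zcl {x | ∃ lam, ∃ h : lam ∈ G,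
      x = Projectivization.mk K (cvec Γ lam) (hne lam h)}) := by
  set T := {x | ∃ lam, ∃ h : lam ∈ G, x = Projectivization.mk K (cvec Γ lam) (hne lam h)}
    with hT
  constructor
  · obtain ⟨lam, hlam⟩ := hGinf.nonempty
    exact ⟨Projectivization.mk K (cvec Γ lam) (hne lam hlam),
      subset_zcl T ⟨lam, hlam, rfl⟩⟩
  · intro A B hA hB hAB
    set GA := {lam : K | ∃ h : lam ∈ G, Projectivization.mk K (cvec Γ lam) (hne lam h) ∈ A}
    set GB := {lam : K | ∃ h : lam ∈ G, Projectivization.mk K (cvec Γ lam) (hne lam h) ∈ B}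
    have hcover : G ⊆ GA ∪ GB := by
      intro lam hlam
      have : Projectivization.mk K (cvec Γ lam) (hne lam hlam) ∈ A ∪ B :=
        hAB (subset_zcl T ⟨lam, hlam, rfl⟩)
      rcases this with h | h
      · exact Or.inl ⟨hlam, h⟩
      · exact Or.inr ⟨hlam, h⟩
    have : GA.Infinite ∨ GB.Infinite := by
      rw [← Set.infinite_union]
      exact (hGinf.mono hcover)
    rcases this with h | h
    · exact Or.inl (curve_zcl_subset hA hne h)
    · exact Or.inr (curve_zcl_subset hB hne h)

lemma curve_dimGE {Γ : Fin (N+1) → Polynomial K} {G : Set K} (S : Set (PS K N))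
    (hne : ∀ lam ∈ G, cvec Γ lam ≠ 0) (hGinf : G.Infinite)
    (hmem : ∀ lam (h : lam ∈ G), Projectivization.mk K (cvec Γ lam) (hne lam h) ∈ S)
    (l0 l1 : K) (h0 : l0 ∈ G) (h1 : l1 ∈ G)
    (hdiff : Projectivization.mk K (cvec Γ l0) (hne l0 h0) ≠
      Projectivization.mk K (cvec Γ l1) (hne l1 h1)) :
    dimGE S 1 := by
  set T := {x | ∃ lam, ∃ h : lam ∈ G, x = Projectivization.mk K (cvec Γ lam) (hne lam h)}
    with hT
  set x0 := Projectivization.mk K (cvec Γ l0) (hne l0 h0) with hx0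
  refine ⟨![{x0}, zcl T], ?_, ?_, ?_⟩
  · intro i j hij
    have hij' : (i : ℕ) < (j : ℕ) := hij
    have hi : (i : ℕ) = 0 ∧ (j : ℕ) = 1 := by omega
    have hi0 : i = 0 := Fin.ext hi.1
    have hj1 : j = 1 := Fin.ext hi.2
    subst hi0; subst hj1
    simp only [Matrix.cons_val_zero, Matrix.cons_val_one, Matrix.head_cons]
    constructor
    · intro z hz
      simp only [Set.mem_singleton_iff] at hz
      subst hz
      exact subset_zcl T ⟨l0, h0, rfl⟩
    · intro hsub
      have : Projectivization.mk K (cvec Γ l1) (hne l1 h1) ∈ ({x0} : Set (PS K N)) :=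
        hsub (subset_zcl T ⟨l1, h1, rfl⟩)
      simp only [Set.mem_singleton_iff] at this
      exact hdiff this.symm
  · intro i
    match i with
    | 0 => exact ⟨zcl_singleton x0, isIrred_singleton x0⟩
    | 1 => exact ⟨isZClosed_zcl T, isIrred_zcl_curve hne hGinf⟩
  · show zcl T ⊆ zcl S
    apply zcl_mono
    rintro x ⟨lam, h, rfl⟩
    exact hmem lam h

end Curve

section ChainRule

variable {K : Type*} [Field K] {N : ℕ}

lemma derivative_aeval (Γ : Fin (N+1) → Polynomial K) (f : MvPolynomial (Fin (N+1)) K) :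
    Polynomial.derivative (MvPolynomial.aeval Γ f) =
      ∑ i, MvPolynomial.aeval Γ (pderiv i f) * Polynomial.derivative (Γ i) := by
  induction f using MvPolynomial.induction_on with
  | C a =>
      simp [MvPolynomial.aeval_C, MvPolynomial.pderiv_C, Polynomial.algebraMap_apply]
  | add p q hp hq =>
      simp only [map_add, Polynomial.derivative_add, hp, hq, add_mul,
        Finset.sum_add_distrib]
  | mul_X p i hp =>
      rw [map_mul, MvPolynomial.aeval_X, Polynomial.derivative_mul, hp, Finset.sum_mul]
      have key : ∀ k : Fin (N+1),
          MvPolynomial.aeval Γ (pderiv k (p * X i)) * Polynomial.derivative (Γ k)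
          = MvPolynomial.aeval Γ (pderiv k p) * Polynomial.derivative (Γ k) * Γ i
            + (if k = i then (MvPolynomial.aeval Γ) p * Polynomial.derivative (Γ i) else 0) := by
        intro k
        rw [MvPolynomial.pderiv_mul, MvPolynomial.pderiv_X, map_add, map_mul,
          MvPolynomial.aeval_X]
        by_cases hk : k = i
        · subst hk
          rw [Pi.single_eq_same, mul_one, if_pos rfl]
          ring
        · rw [Pi.single_eq_of_ne (Ne.symm hk), mul_zero, map_zero, if_neg hk]
          ring
      rw [Finset.sum_congr rfl (fun k _ => key k), Finset.sum_add_distrib,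
        Finset.sum_ite_eq' Finset.univ i
          (fun k => (MvPolynomial.aeval Γ) p * Polynomial.derivative (Γ i))]
      simp [add_comm]

lemma eval_aeval_poly (Γ : Fin (N+1) → Polynomial K) (f : MvPolynomial (Fin (N+1)) K)
    (ε : K) :
    Polynomial.eval ε (MvPolynomial.aeval Γ f) = MvPolynomial.eval (cvec Γ ε) f :=
  ringhom_aeval (Polynomial.evalRingHom ε) (by simp) Γ f

variable [Infinite K]

lemma dir_tangent {X : Set (PS K N)} (Γ : Fin (N+1) → Polynomial K)
    (hcurve : ∀ ε : K, cvec Γ ε ∈ cone X) {q : PS K N} (hq : q.rep = cvec Γ 0)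
    {f : MvPolynomial (Fin (N+1)) K} (hf : f ∈ vanishing X) :
    ∑ k, (Polynomial.derivative (Γ k)).eval 0 * eval q.rep (pderiv k f) = 0 := by
  have hg : (MvPolynomial.aeval Γ f : Polynomial K) = 0 := by
    apply Polynomial.funext
    intro ε
    rw [eval_aeval_poly, Polynomial.eval_zero]
    exact hf _ (hcurve ε)
  have h2 : Polynomial.eval 0 (Polynomial.derivative (MvPolynomial.aeval Γ f)) = 0 := by
    rw [hg]; simp
  rw [derivative_aeval, Polynomial.eval_finset_sum] at h2
  simp only [Polynomial.eval_mul, eval_aeval_poly] at h2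
  rw [hq]
  rw [Finset.sum_congr rfl (fun k _ => mul_comm ((Polynomial.derivative (Γ k)).eval 0)
    (eval (cvec Γ 0) (pderiv k f)))]
  exact h2

lemma range_pair {α : Type*} (u v : α) : Set.range ![u, v] = {u, v} := by
  ext w
  constructor
  · rintro ⟨i, rfl⟩
    fin_cases i
    · exact Or.inl rfl
    · exact Or.inr rfl
  · rintro (rfl | rfl)
    · exact ⟨0, rfl⟩
    · exact ⟨1, rfl⟩

lemma finrank_span_pair {u v : Fin (N+1) → K} (h : LinearIndependent K ![u, v]) :
    Module.finrank K (Submodule.span K ({u, v} : Set (Fin (N+1) → K))) = 2 := by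
  rw [← range_pair u v]
  rw [finrank_span_eq_card h]
  rfl

lemma li_pair_of_mk_ne {u v : Fin (N+1) → K} (hu : u ≠ 0) (hv : v ≠ 0)
    (h : Projectivization.mk K u hu ≠ Projectivization.mk K v hv) :
    LinearIndependent K ![u, v] := by
  rw [LinearIndependent.pair_iff]
  intro s t hst
  by_contra hcon
  push_neg at hcon
  by_cases hs : s = 0
  · subst hs
    have ht := hcon rfl
    simp only [zero_smul, zero_add] at hst
    rcases smul_eq_zero.1 hst with h' | h'
    · exact ht h'
    · exact hv h'
  · have hts : t ≠ 0 := by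
      rintro rfl
      simp only [zero_smul, add_zero] at hst
      rcases smul_eq_zero.1 hst with h' | h'
      · exact hs h'
      · exact hu h'
    apply h
    rw [Projectivization.mk_eq_mk_iff]
    have hsu : u = (-t/s) • v := by
      have h1 : s • u = (-t) • v := by
        linear_combination (norm := module) hst
      have h2 : u = s⁻¹ • (s • u) := by rw [smul_smul, inv_mul_cancel₀ hs, one_smul]
      rw [h2, h1, smul_smul, div_eq_inv_mul]
    refine ⟨Units.mk0 (-t/s) (div_ne_zero (neg_ne_zero.2 hts) hs), ?_⟩
    rw [Units.smul_def]
    exact hsu.symm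

/-- Secant membership via two distinct points of `X` whose span contains `p`. -/
lemma secant_two_point {X : Set (PS K N)} {p : PS K N}
    (x' y' : Fin (N+1) → K) (hx : x' ≠ 0) (hy : y' ≠ 0)
    (hxX : x' ∈ cone X) (hyX : y' ∈ cone X)
    (hneq : Projectivization.mk K x' hx ≠ Projectivization.mk K y' hy)
    (hrep : p.rep ∈ Submodule.span K ({x', y'} : Set (Fin (N+1) → K))) :
    Projectivization.mk K x' hx ∈ secLocus X p := by
  set W := Submodule.span K ({x', y'} : Set (Fin (N+1) → K)) with hW
  have hxW : x' ∈ W := Submodule.subset_span (Or.inl rfl)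
  have hyW : y' ∈ W := Submodule.subset_span (Or.inr rfl)
  have hxL : Projectivization.mk K x' hx ∈ linSet W := by
    show (Projectivization.mk K x' hx).submodule ≤ W
    rw [Projectivization.submodule_mk]
    rwa [Submodule.span_singleton_le_iff_mem]
  have hyL : Projectivization.mk K y' hy ∈ linSet W := by
    show (Projectivization.mk K y' hy).submodule ≤ W
    rw [Projectivization.submodule_mk]
    rwa [Submodule.span_singleton_le_iff_mem]
  have hpL : p ∈ linSet W := by
    show p.submodule ≤ W
    rw [Projectivization.submodule_eq]
    rwa [Submodule.span_singleton_le_iff_mem]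
  refine ⟨hxX hx, ?_⟩
  right
  refine Set.mem_iUnion₂.2 ⟨linSet W, ⟨⟨⟨W, ?_, rfl⟩, ?_⟩, hpL⟩, hxL⟩
  · exact finrank_span_pair (li_pair_of_mk_ne hx hy hneq)
  · exact Or.inl ⟨Projectivization.mk K x' hx, ⟨hxX hx, hxL⟩,
      Projectivization.mk K y' hy, ⟨hyX hy, hyL⟩, hneq⟩

/-- Secant membership via a tangent line through `p`. -/
lemma secant_tangent {X : Set (PS K N)} {p : PS K N}
    (x' : Fin (N+1) → K) (hx : x' ≠ 0) (hxX : x' ∈ cone X)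
    (Γ : Fin (N+1) → Polynomial K)
    (hΓcone : ∀ ε : K, cvec Γ ε ∈ cone X)
    (hΓ0 : cvec Γ 0 = x')
    (hΓd : (fun k => (Polynomial.derivative (Γ k)).eval 0) = p.rep)
    (hpX : p ∉ X) :
    Projectivization.mk K x' hx ∈ secLocus X p := by
  set q := Projectivization.mk K x' hx with hq
  have hqX : q ∈ X := hxX hx
  have hpq : p ≠ q := fun h => hpX (h ▸ hqX)
  set W := Submodule.span K ({x', p.rep} : Set (Fin (N+1) → K)) with hW
  have hxW : x' ∈ W := Submodule.subset_span (Or.inl rfl)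
  have hpW : p.rep ∈ W := Submodule.subset_span (Or.inr rfl)
  have hqL : q ∈ linSet W := by
    show q.submodule ≤ W
    rw [hq, Projectivization.submodule_mk]
    rwa [Submodule.span_singleton_le_iff_mem]
  have hpL : p ∈ linSet W := by
    show p.submodule ≤ W
    rw [Projectivization.submodule_eq]
    rwa [Submodule.span_singleton_le_iff_mem]
  have hli : LinearIndependent K ![x', p.rep] := by
    apply li_pair_of_mk_ne hx p.rep_nonzero
    rw [Projectivization.mk_rep]
    exact fun h => hpq h.symm
  -- the two tangency statements
  obtain ⟨crep, hcrep⟩ := Projectivization.exists_smul_eq_mk_rep K x' hx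
  rw [Units.smul_def] at hcrep
  have tangent_dir : ∀ f ∈ vanishing X,
      ∑ k, p.rep k * eval q.rep (pderiv k f) = 0 := by
    intro f hf
    have := dir_tangent (fun k => Polynomial.C ((crep : K)) * Γ k)
      (fun ε => by
        have : cvec (fun k => Polynomial.C ((crep : K)) * Γ k) ε = (crep : K) • cvec Γ ε := by
          funext k; simp [cvec, Pi.smul_apply, smul_eq_mul]
        rw [this]
        exact smul_mem_cone _ (hΓcone ε))
      (q := q) (by
        have : cvec (fun k => Polynomial.C ((crep : K)) * Γ k) 0 = (crep : K) • cvec Γ 0 := by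
          funext k; simp [cvec, Pi.smul_apply, smul_eq_mul]
        rw [this, hΓ0, ← hcrep]) hf
    simp only [Polynomial.derivative_mul, Polynomial.derivative_C, zero_mul, zero_add,
      Polynomial.eval_mul, Polynomial.eval_C] at this
    have h2 : (crep : K) * ∑ k, (Polynomial.derivative (Γ k)).eval 0 *
        eval q.rep (pderiv k f) = 0 := by
      calc (crep : K) * ∑ k, (Polynomial.derivative (Γ k)).eval 0 * eval q.rep (pderiv k f)
          = ∑ k, (crep : K) * (Polynomial.derivative (Γ k)).eval 0
              * eval q.rep (pderiv k f) := by
            rw [Finset.mul_sum]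
            exact Finset.sum_congr rfl (fun k _ => by ring)
        _ = 0 := this
    have h3 := mul_eq_zero.1 h2
    rcases h3 with h3 | h3
    · exact absurd h3 crep.ne_zero
    · rw [← h3]
      refine Finset.sum_congr rfl (fun k _ => ?_)
      rw [← congrFun hΓd k]
  have tangent_self : ∀ f ∈ vanishing X,
      ∑ k, x' k * eval q.rep (pderiv k f) = 0 := by
    intro f hf
    have := dir_tangent (fun k => Polynomial.C ((crep : K) * x' k) * (1 + Polynomial.X))
      (fun ε => by
        have : cvec (fun k => Polynomial.C ((crep : K) * x' k) * (1 + Polynomial.X)) ε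
            = ((crep : K) * (1 + ε)) • x' := by
          funext k; simp [cvec, Pi.smul_apply, smul_eq_mul]; ring
        rw [this]
        exact smul_mem_cone _ hxX)
      (q := q) (by
        have : cvec (fun k => Polynomial.C ((crep : K) * x' k) * (1 + Polynomial.X)) 0
            = (crep : K) • x' := by
          funext k; simp [cvec, Pi.smul_apply, smul_eq_mul]
        rw [this, ← hcrep]) hf
    simp only [Polynomial.derivative_mul, Polynomial.derivative_C, zero_mul, zero_add,
      Polynomial.derivative_add, Polynomial.derivative_one, Polynomial.derivative_X,
      Polynomial.eval_mul, Polynomial.eval_C, Polynomial.eval_one] at this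
    have h2 : (crep : K) * ∑ k, x' k * eval q.rep (pderiv k f) = 0 := by
      calc (crep : K) * ∑ k, x' k * eval q.rep (pderiv k f)
          = ∑ k, (crep : K) * x' k * 1 * eval q.rep (pderiv k f) := by
            rw [Finset.mul_sum]
            exact Finset.sum_congr rfl (fun k _ => by ring)
        _ = 0 := this
    rcases mul_eq_zero.1 h2 with h3 | h3
    · exact absurd h3 crep.ne_zero
    · exact h3
  refine ⟨hqX, ?_⟩
  right
  refine Set.mem_iUnion₂.2 ⟨linSet W, ⟨⟨⟨W, ?_, rfl⟩, ?_⟩, hpL⟩, hqL⟩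
  · exact finrank_span_pair hli
  · right
    refine ⟨q, ⟨hqX, hqL⟩, ?_⟩
    intro z hz
    have hzW : z.rep ∈ W := by
      have : z.submodule ≤ W := hz
      rw [Projectivization.submodule_eq] at this
      rw [← Submodule.span_singleton_le_iff_mem]
      exact this
    rw [Submodule.mem_span_pair] at hzW
    obtain ⟨s, t, hst⟩ := hzW
    intro f hf
    have h1 := tangent_self f hf
    have h2 := tangent_dir f hf
    calc ∑ k, z.rep k * eval q.rep (pderiv k f)
        = ∑ k, ((s * x' k + t * p.rep k) * eval q.rep (pderiv k f)) := by
          refine Finset.sum_congr rfl (fun k _ => ?_)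
          rw [← congrFun hst k]
          simp [Pi.smul_apply, smul_eq_mul, Pi.add_apply]
      _ = s * (∑ k, x' k * eval q.rep (pderiv k f))
          + t * (∑ k, p.rep k * eval q.rep (pderiv k f)) := by
          rw [Finset.mul_sum, Finset.mul_sum, ← Finset.sum_add_distrib]
          exact Finset.sum_congr rfl (fun k _ => by ring)
      _ = 0 := by rw [h1, h2]; ring

end ChainRule

section Scroll

variable {K : Type*} [Field K] {n : ℕ} {a : Fin n → ℕ} {N : ℕ}

/-- Canonical linear combination of the scroll's frame vectors. -/
def comb (D : ScrollData K N n a) (c : ((i : Fin n) × Fin (a i + 1)) → K) :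
    Fin (N+1) → K :=
  ∑ q : (i : Fin n) × Fin (a i + 1), c q • D.v q.1 q.2

lemma comb_eq_zero {D : ScrollData K N n a} {c : ((i : Fin n) × Fin (a i + 1)) → K}
    (h : comb D c = 0) : ∀ q, c q = 0 :=
  Fintype.linearIndependent_iff.1 D.indep c h

lemma comb_sub (D : ScrollData K N n a) (c c' : ((i : Fin n) × Fin (a i + 1)) → K) :
    comb D (fun q => c q - c' q) = comb D c - comb D c' := by
  unfold comb
  rw [← Finset.sum_sub_distrib]
  exact Finset.sum_congr rfl (fun q _ => sub_smul _ _ _)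

lemma comb_inj {D : ScrollData K N n a} {c c' : ((i : Fin n) × Fin (a i + 1)) → K}
    (h : comb D c = comb D c') : ∀ q, c q = c' q := by
  intro q
  have h0 : comb D (fun q => c q - c' q) = 0 := by
    rw [comb_sub, h, sub_self]
  have := comb_eq_zero h0 q
  exact sub_eq_zero.1 this

lemma comb_smul (D : ScrollData K N n a) (r : K) (c : ((i : Fin n) × Fin (a i + 1)) → K) :
    r • comb D c = comb D (fun q => r * c q) := by
  unfold comb
  rw [Finset.smul_sum]
  exact Finset.sum_congr rfl (fun q _ => (smul_smul r (c q) _))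

lemma comb_add (D : ScrollData K N n a) (c c' : ((i : Fin n) × Fin (a i + 1)) → K) :
    comb D c + comb D c' = comb D (fun q => c q + c' q) := by
  unfold comb
  rw [← Finset.sum_add_distrib]
  exact Finset.sum_congr rfl (fun q _ => (add_smul _ _ _).symm)

/-- A point of the ruling with coefficients `B`. -/
def rulvec (D : ScrollData K N n a) (B : Fin n → K) (s t : K) : Fin (N+1) → K :=
  ∑ i, B i • D.w i s t

lemma rulvec_eq_comb (D : ScrollData K N n a) (B : Fin n → K) (s t : K) :
    rulvec D B s t
      = comb D (fun q => B q.1 * (s ^ (a q.1 - (q.2 : ℕ)) * t ^ (q.2 : ℕ))) := by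
  unfold rulvec comb ScrollData.w
  rw [← Finset.univ_sigma_univ, Finset.sum_sigma]
  refine Finset.sum_congr rfl (fun i _ => ?_)
  rw [Finset.smul_sum]
  exact Finset.sum_congr rfl (fun j _ => (smul_smul _ _ _))

lemma smul_rulvec (D : ScrollData K N n a) (r : K) (B : Fin n → K) (s t : K) :
    r • rulvec D B s t = rulvec D (fun i => r * B i) s t := by
  unfold rulvec
  rw [Finset.smul_sum]
  exact Finset.sum_congr rfl (fun i _ => smul_smul _ _ _)

lemma rulvec_mem_span (D : ScrollData K N n a) (B : Fin n → K) (s t : K) :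
    rulvec D B s t ∈ Submodule.span K (Set.range fun i => D.w i s t) :=
  Submodule.sum_mem _ fun i _ =>
    Submodule.smul_mem _ _ (Submodule.subset_span ⟨i, rfl⟩)

lemma mk_mem_carrier (D : ScrollData K N n a) {s t : K} (hst : (s, t) ≠ (0, 0))
    {z : Fin (N+1) → K} (hz : z ≠ 0)
    (hmem : z ∈ Submodule.span K (Set.range fun i => D.w i s t)) :
    Projectivization.mk K z hz ∈ D.carrier := by
  unfold ScrollData.carrier
  refine Set.mem_iUnion.2 ⟨s, Set.mem_iUnion.2 ⟨t, Set.mem_iUnion.2 ⟨hst, ?_⟩⟩⟩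
  show (Projectivization.mk K z hz).submodule ≤ _
  rw [Projectivization.submodule_mk, Submodule.span_singleton_le_iff_mem]
  exact hmem

lemma mem_carrier_rep (D : ScrollData K N n a) {s t : K} (hst : (s, t) ≠ (0, 0))
    {p : PS K N} (hmem : p.rep ∈ Submodule.span K (Set.range fun i => D.w i s t)) :
    p ∈ D.carrier := by
  unfold ScrollData.carrier
  refine Set.mem_iUnion.2 ⟨s, Set.mem_iUnion.2 ⟨t, Set.mem_iUnion.2 ⟨hst, ?_⟩⟩⟩
  show p.submodule ≤ _
  rw [Projectivization.submodule_eq, Submodule.span_singleton_le_iff_mem]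
  exact hmem

/-- Two rulings over distinct parameters intersect trivially (for scrolls of type
`(1,…,1,2)`). -/
lemma rulvec_inj (D : ScrollData K N n a) (i₀ : Fin n)
    (h2 : a i₀ = 2) (h1 : ∀ i, i ≠ i₀ → a i = 1)
    {B₁ B₂ : Fin n → K} {lam u v : K} (hδ : v - lam * u ≠ 0)
    (h : rulvec D B₁ 1 lam = rulvec D B₂ u v) : ∀ i, B₁ i = 0 := by
  rw [rulvec_eq_comb, rulvec_eq_comb] at h
  have hcoef := comb_inj h
  intro i
  by_cases hi : i = i₀
  · subst hi
    have e0 := hcoef ⟨i, ⟨0, by omega⟩⟩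
    have e1 := hcoef ⟨i, ⟨1, by omega⟩⟩
    simp only [] at e0 e1
    rw [show a i - 0 = 2 by omega] at e0
    rw [show a i - 1 = 1 by omega] at e1
    simp only [pow_zero, pow_one, one_pow, one_mul, mul_one] at e0 e1
    -- e0 : B₁ i = B₂ i * u^2 ; e1 : B₁ i * lam = B₂ i * (u * v)
    have h3 : B₂ i * u * (v - lam * u) = 0 := by
      linear_combination lam * e0 - e1
    rcases mul_eq_zero.1 h3 with h4 | h4
    · -- B₂ i * u = 0
      rw [e0]
      linear_combination u * h4
    · exact absurd h4 hδ
  · have ha1 := h1 i hi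
    have e0 := hcoef ⟨i, ⟨0, by omega⟩⟩
    have e1 := hcoef ⟨i, ⟨1, by omega⟩⟩
    simp only [] at e0 e1
    rw [show a i - 0 = 1 by omega] at e0
    rw [show a i - 1 = 0 by omega] at e1
    simp only [pow_zero, pow_one, one_pow, one_mul, mul_one] at e0 e1
    -- e0 : B₁ i = B₂ i * u ; e1 : B₁ i * lam = B₂ i * v
    have h3 : B₁ i * (v - lam * u) = 0 := by
      linear_combination v * e0 - u * e1
    rcases mul_eq_zero.1 h3 with h4 | h4
    · exact h4
    · exact absurd h4 hδ

/-- Polynomial family of coordinates attached to polynomial coefficients. -/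
def coefΓ (D : ScrollData K N n a) (cp : ((i : Fin n) × Fin (a i + 1)) → Polynomial K) :
    Fin (N+1) → Polynomial K :=
  fun k => ∑ q : (i : Fin n) × Fin (a i + 1), cp q * Polynomial.C (D.v q.1 q.2 k)

lemma cvec_coefΓ (D : ScrollData K N n a)
    (cp : ((i : Fin n) × Fin (a i + 1)) → Polynomial K) (lam : K) :
    cvec (coefΓ D cp) lam = comb D (fun q => (cp q).eval lam) := by
  funext k
  show Polynomial.eval lam (∑ q : (i : Fin n) × Fin (a i + 1),
    cp q * Polynomial.C (D.v q.1 q.2 k)) = _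
  rw [Polynomial.eval_finset_sum]
  unfold comb
  rw [Finset.sum_apply]
  refine Finset.sum_congr rfl (fun q _ => ?_)
  rw [Polynomial.eval_mul, Polynomial.eval_C]
  simp [Pi.smul_apply, smul_eq_mul]

lemma deriv_coefΓ (D : ScrollData K N n a)
    (cp : ((i : Fin n) × Fin (a i + 1)) → Polynomial K) :
    (fun k => (Polynomial.derivative ((coefΓ D cp) k)).eval 0)
      = comb D (fun q => (Polynomial.derivative (cp q)).eval 0) := by
  funext k
  show (Polynomial.derivative (∑ q : (i : Fin n) × Fin (a i + 1),
    cp q * Polynomial.C (D.v q.1 q.2 k))).eval 0 = _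
  rw [map_sum, Polynomial.eval_finset_sum]
  unfold comb
  rw [Finset.sum_apply]
  refine Finset.sum_congr rfl (fun q _ => ?_)
  rw [Polynomial.derivative_mul, Polynomial.derivative_C, mul_zero, add_zero,
    Polynomial.eval_mul, Polynomial.eval_C]
  simp [Pi.smul_apply, smul_eq_mul]

variable [Infinite K]

/-- Case A: a pencil of honest 2-point secant lines through `p`. -/
lemma caseA (D : ScrollData K N n a) (i₀ : Fin n)
    (h2 : a i₀ = 2) (h1 : ∀ i, i ≠ i₀ → a i = 1)
    (p : PS K N) (hp : p ∉ D.carrier)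
    (A : ((i : Fin n) × Fin (a i + 1)) → K)
    (hA : comb D A = p.rep)
    (U V Δ : Polynomial K) (CX CY : Fin n → Polynomial K)
    (hΔ : ∀ lam : K, Δ.eval lam = V.eval lam - lam * U.eval lam)
    (hG : {lam : K | Δ.eval lam ≠ 0}.Infinite)
    (hid : ∀ (lam : K) (q : (i : Fin n) × Fin (a i + 1)),
      Δ.eval lam * A q = (CX q.1).eval lam * lam ^ (q.2 : ℕ)
        + (CY q.1).eval lam *
          ((U.eval lam) ^ (a q.1 - (q.2 : ℕ)) * (V.eval lam) ^ (q.2 : ℕ))) :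
    dimGE (secLocus D.carrier p) 1 := by
  set Γ := coefΓ D (fun q => CX q.1 * Polynomial.X ^ ((q.2 : ℕ))) with hΓ
  have hxvec : ∀ lam : K, cvec Γ lam = rulvec D (fun i => (CX i).eval lam) 1 lam := by
    intro lam
    rw [hΓ, cvec_coefΓ, rulvec_eq_comb]
    refine congrArg (comb D) ?_
    funext q
    show Polynomial.eval lam (CX q.1 * Polynomial.X ^ ((q.2 : ℕ)))
      = (CX q.1).eval lam * (1 ^ (a q.1 - (q.2 : ℕ)) * lam ^ (q.2 : ℕ))
    rw [Polynomial.eval_mul, Polynomial.eval_pow, Polynomial.eval_X, one_pow, one_mul]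
  set yv : K → (Fin (N+1) → K) := fun lam =>
    rulvec D (fun i => (CY i).eval lam) (U.eval lam) (V.eval lam) with hyv
  have hsum : ∀ lam : K, (Δ.eval lam) • p.rep = cvec Γ lam + yv lam := by
    intro lam
    rw [hxvec]
    simp only [hyv]
    rw [← hA, rulvec_eq_comb, rulvec_eq_comb, comb_smul, comb_add]
    refine congrArg (comb D) ?_
    funext q
    show Δ.eval lam * A q
      = (CX q.1).eval lam * (1 ^ (a q.1 - (q.2 : ℕ)) * lam ^ (q.2 : ℕ))
        + (CY q.1).eval lam * ((U.eval lam) ^ (a q.1 - (q.2 : ℕ)) * (V.eval lam) ^ (q.2 : ℕ))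
    rw [hid lam q, one_pow, one_mul]
  have hUV : ∀ lam : K, Δ.eval lam ≠ 0 → (U.eval lam, V.eval lam) ≠ ((0 : K), (0 : K)) := by
    intro lam hlam hcon
    apply hlam
    rw [Prod.mk.injEq] at hcon
    obtain ⟨hU, hV⟩ := hcon
    rw [hΔ lam, hU, hV]
    ring
  have hx0 : ∀ lam ∈ {lam : K | Δ.eval lam ≠ 0}, cvec Γ lam ≠ 0 := by
    intro lam hlam h0
    apply hp
    have hps : p.rep = (Δ.eval lam)⁻¹ • yv lam := by
      have hs := hsum lam
      rw [h0, zero_add] at hs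
      rw [← hs, smul_smul, inv_mul_cancel₀ hlam, one_smul]
    refine mem_carrier_rep D (hUV lam hlam) (s := U.eval lam) (t := V.eval lam) ?_
    rw [hps]
    exact Submodule.smul_mem _ _ (rulvec_mem_span D _ _ _)
  have hy0 : ∀ lam ∈ {lam : K | Δ.eval lam ≠ 0}, yv lam ≠ 0 := by
    intro lam hlam h0
    apply hp
    have hps : p.rep = (Δ.eval lam)⁻¹ • cvec Γ lam := by
      have hs := hsum lam
      rw [h0, add_zero] at hs
      rw [← hs, smul_smul, inv_mul_cancel₀ hlam, one_smul]
    refine mem_carrier_rep D (s := 1) (t := lam) (by simp) ?_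
    rw [hps, hxvec]
    exact Submodule.smul_mem _ _ (rulvec_mem_span D _ _ _)
  have hδ' : ∀ lam : K, Δ.eval lam ≠ 0 → V.eval lam - lam * U.eval lam ≠ 0 := by
    intro lam hlam hcon
    exact hlam (by rw [hΔ lam, hcon])
  have hneq : ∀ (lam : K) (hlam : lam ∈ {lam : K | Δ.eval lam ≠ 0}),
      Projectivization.mk K (cvec Γ lam) (hx0 lam hlam) ≠
        Projectivization.mk K (yv lam) (hy0 lam hlam) := by
    intro lam hlam heq
    rw [Projectivization.mk_eq_mk_iff] at heq
    obtain ⟨c, hc⟩ := heq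
    rw [Units.smul_def] at hc
    have hcv : cvec Γ lam = rulvec D (fun i => (c : K) * (CY i).eval lam)
        (U.eval lam) (V.eval lam) := by
      rw [← hc]
      simp only [hyv]
      rw [smul_rulvec]
    rw [hxvec] at hcv
    have hz := rulvec_inj D i₀ h2 h1 (hδ' lam hlam) hcv
    apply hx0 lam hlam
    rw [hxvec]
    have : (fun i => (CX i).eval lam) = fun _ : Fin n => (0 : K) := funext hz
    rw [this]
    unfold rulvec
    simp
  have hmem : ∀ lam (h : lam ∈ {lam : K | Δ.eval lam ≠ 0}),
      Projectivization.mk K (cvec Γ lam) (hx0 lam h) ∈ secLocus D.carrier p := by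
    intro lam hlam
    refine secant_two_point _ (yv lam) (hx0 lam hlam) (hy0 lam hlam) ?_ ?_
      (hneq lam hlam) ?_
    · intro hne
      exact mk_mem_carrier D (s := 1) (t := lam) (by simp) hne
        (by rw [hxvec]; exact rulvec_mem_span D _ _ _)
    · intro hne
      exact mk_mem_carrier D (hUV lam hlam) hne (rulvec_mem_span D _ _ _)
    · rw [Submodule.mem_span_pair]
      refine ⟨(Δ.eval lam)⁻¹, (Δ.eval lam)⁻¹, ?_⟩
      rw [← smul_add, ← hsum, smul_smul, inv_mul_cancel₀ hlam, one_smul]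
  -- two distinct points
  obtain ⟨l0, hl0, l1, hl1, hne01⟩ := hG.nontrivial
  have hdiff : Projectivization.mk K (cvec Γ l0) (hx0 l0 hl0) ≠
      Projectivization.mk K (cvec Γ l1) (hx0 l1 hl1) := by
    intro heq
    rw [Projectivization.mk_eq_mk_iff] at heq
    obtain ⟨c, hc⟩ := heq
    rw [Units.smul_def] at hc
    have hcv : rulvec D (fun i => (CX i).eval l0) 1 l0
        = rulvec D (fun i => (c : K) * (CX i).eval l1) 1 l1 := by
      rw [← smul_rulvec, ← hxvec, ← hxvec, hc]
    have hz := rulvec_inj D i₀ h2 h1 (u := 1) (v := l1)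
      (by simpa [mul_one] using sub_ne_zero.2 (Ne.symm hne01)) hcv
    apply hx0 l0 hl0
    rw [hxvec]
    have : (fun i => (CX i).eval l0) = fun _ : Fin n => (0 : K) := funext hz
    rw [this]
    unfold rulvec
    simp
  exact curve_dimGE _ hx0 hG hmem l0 l1 hl0 hl1 hdiff

end Scroll

section CaseB

variable {K : Type*} [Field K] {n : ℕ} {a : Fin n → ℕ} {N : ℕ}

/-- index `0` in the `i`-th block. -/
def idx0 {a : Fin n → ℕ} (i : Fin n) : Fin (a i + 1) := ⟨0, Nat.succ_pos _⟩

/-- index `1` in the `i`-th block. -/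
def idx1 {a : Fin n → ℕ} (hge : ∀ i, 1 ≤ a i) (i : Fin n) : Fin (a i + 1) :=
  ⟨1, by have := hge i; omega⟩

/-- index `2` in the distinguished block. -/
def idx2 {a : Fin n → ℕ} {i₀ : Fin n} (h2 : a i₀ = 2) : Fin (a i₀ + 1) :=
  ⟨2, by omega⟩

def CBfun (A : ((i : Fin n) × Fin (a i + 1)) → K) (i₀ : Fin n) (hge : ∀ i, 1 ≤ a i) :
    Fin n → Polynomial K := fun i =>
  if i = i₀ then Polynomial.C (A ⟨i₀, idx1 hge i₀⟩)
  else Polynomial.C (A ⟨i, idx1 hge i⟩) - Polynomial.C (A ⟨i, idx0 i⟩) * Polynomial.X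

def CCfun (A : ((i : Fin n) × Fin (a i + 1)) → K) (i₀ : Fin n) : Fin n → K := fun i =>
  if i = i₀ then 0 else A ⟨i, idx0 i⟩

lemma CBfun_pos (A : ((i : Fin n) × Fin (a i + 1)) → K) (i₀ : Fin n) (hge : ∀ i, 1 ≤ a i) :
    CBfun A i₀ hge i₀ = Polynomial.C (A ⟨i₀, idx1 hge i₀⟩) := if_pos rfl

lemma CBfun_neg (A : ((i : Fin n) × Fin (a i + 1)) → K) (i₀ : Fin n) (hge : ∀ i, 1 ≤ a i)
    {i : Fin n} (hi : i ≠ i₀) :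
    CBfun A i₀ hge i
      = Polynomial.C (A ⟨i, idx1 hge i⟩) - Polynomial.C (A ⟨i, idx0 i⟩) * Polynomial.X :=
  if_neg hi

lemma CCfun_pos (A : ((i : Fin n) × Fin (a i + 1)) → K) (i₀ : Fin n) :
    CCfun A i₀ i₀ = 0 := if_pos rfl

lemma CCfun_neg (A : ((i : Fin n) × Fin (a i + 1)) → K) (i₀ : Fin n)
    {i : Fin n} (hi : i ≠ i₀) : CCfun A i₀ i = A ⟨i, idx0 i⟩ := if_neg hi

variable [Infinite K]

/-- Case B: tangent secant lines (only possible in characteristic 2). -/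
lemma caseB (D : ScrollData K N n a) (i₀ : Fin n)
    (h2 : a i₀ = 2) (h1 : ∀ i, i ≠ i₀ → a i = 1)
    (p : PS K N) (hp : p ∉ D.carrier)
    (A : ((i : Fin n) × Fin (a i + 1)) → K)
    (hA : comb D A = p.rep)
    (hα0 : A ⟨i₀, ⟨0, by omega⟩⟩ = 0) (hα2 : A ⟨i₀, ⟨2, by omega⟩⟩ = 0)
    (h2α1 : 2 * A ⟨i₀, ⟨1, by omega⟩⟩ = 0) (hα1 : A ⟨i₀, ⟨1, by omega⟩⟩ ≠ 0) :
    dimGE (secLocus D.carrier p) 1 := by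
  have hge : ∀ i, 1 ≤ a i := by
    intro i
    by_cases hi : i = i₀
    · subst hi; omega
    · have := h1 i hi; omega
  set CBp : Fin n → Polynomial K := CBfun A i₀ hge with hCBp
  set CC : Fin n → K := CCfun A i₀ with hCC
  set Γ := coefΓ D (fun q => CBp q.1 * Polynomial.X ^ ((q.2 : ℕ))) with hΓ
  have hCB0 : ∀ lam : K, (CBp i₀).eval lam = A ⟨i₀, ⟨1, by omega⟩⟩ := by
    intro lam
    rw [hCBp, CBfun_pos, Polynomial.eval_C]
    rfl
  have hCBne : ∀ (i : Fin n) (hi : i ≠ i₀) (lam : K), (CBp i).eval lam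
      = A ⟨i, idx1 hge i⟩ - lam * A ⟨i, idx0 i⟩ := by
    intro i hi lam
    rw [hCBp, CBfun_neg A i₀ hge hi, Polynomial.eval_sub, Polynomial.eval_C,
      Polynomial.eval_mul, Polynomial.eval_C, Polynomial.eval_X, mul_comm]
  have hxvec : ∀ lam : K, cvec Γ lam = rulvec D (fun i => (CBp i).eval lam) 1 lam := by
    intro lam
    rw [hΓ, cvec_coefΓ, rulvec_eq_comb]
    refine congrArg (comb D) ?_
    funext q
    show Polynomial.eval lam (CBp q.1 * Polynomial.X ^ ((q.2 : ℕ)))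
      = (CBp q.1).eval lam * (1 ^ (a q.1 - (q.2 : ℕ)) * lam ^ (q.2 : ℕ))
    rw [Polynomial.eval_mul, Polynomial.eval_pow, Polynomial.eval_X, one_pow, one_mul]
  have hx0 : ∀ lam : K, cvec Γ lam ≠ 0 := by
    intro lam h0
    rw [hxvec lam, rulvec_eq_comb] at h0
    have := comb_eq_zero h0 ⟨i₀, ⟨0, by omega⟩⟩
    simp only [pow_zero, one_pow, one_mul, mul_one] at this
    rw [hCB0 lam] at this
    exact hα1 this
  have hcone : ∀ lam : K, cvec Γ lam ∈ cone D.carrier := by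
    intro lam hne
    refine mk_mem_carrier D (s := 1) (t := lam) (by simp) hne ?_
    rw [hxvec lam]
    exact rulvec_mem_span D _ _ _
  have hmem : ∀ lam (h : lam ∈ (Set.univ : Set K)),
      Projectivization.mk K (cvec Γ lam) (hx0 lam) ∈ secLocus D.carrier p := by
    intro lam _
    set Γε := coefΓ D (fun q =>
      (Polynomial.C ((CBp q.1).eval lam) + Polynomial.C (CC q.1) * Polynomial.X)
        * (Polynomial.C lam + Polynomial.X) ^ ((q.2 : ℕ))) with hΓε
    have hc1 : ∀ ε : K, cvec Γε ε
        = rulvec D (fun i => (CBp i).eval lam + ε * CC i) 1 (lam + ε) := by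
      intro ε
      rw [hΓε, cvec_coefΓ, rulvec_eq_comb]
      refine congrArg (comb D) ?_
      funext q
      show Polynomial.eval ε ((Polynomial.C ((CBp q.1).eval lam)
          + Polynomial.C (CC q.1) * Polynomial.X)
          * (Polynomial.C lam + Polynomial.X) ^ ((q.2 : ℕ)))
        = ((CBp q.1).eval lam + ε * CC q.1) * (1 ^ (a q.1 - (q.2 : ℕ)) * (lam + ε) ^ (q.2 : ℕ))
      rw [Polynomial.eval_mul, Polynomial.eval_add, Polynomial.eval_C, Polynomial.eval_mul,
        Polynomial.eval_C, Polynomial.eval_X, Polynomial.eval_pow, Polynomial.eval_add,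
        Polynomial.eval_C, Polynomial.eval_X, one_pow, one_mul, mul_comm ((CC q.1)) ε]
    have hΓcone : ∀ ε : K, cvec Γε ε ∈ cone D.carrier := by
      intro ε hne
      refine mk_mem_carrier D (s := 1) (t := lam + ε) (by simp) hne ?_
      rw [hc1 ε]
      exact rulvec_mem_span D _ _ _
    have hΓ0 : cvec Γε 0 = cvec Γ lam := by
      rw [hc1 0, hxvec lam]
      simp
    have hΓd : (fun k => (Polynomial.derivative (Γε k)).eval 0) = p.rep := by
      rw [hΓε, deriv_coefΓ, ← hA]
      refine congrArg (comb D) ?_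
      funext q
      show (Polynomial.derivative ((Polynomial.C ((CBp q.1).eval lam)
          + Polynomial.C (CC q.1) * Polynomial.X)
          * (Polynomial.C lam + Polynomial.X) ^ ((q.2 : ℕ)))).eval 0 = A q
      rw [Polynomial.derivative_mul, Polynomial.derivative_pow]
      simp only [Polynomial.derivative_add, Polynomial.derivative_C,
        Polynomial.derivative_C_mul_X, zero_add, Polynomial.derivative_X, mul_one,
        Polynomial.eval_add, Polynomial.eval_mul, Polynomial.eval_pow, Polynomial.eval_C,
        Polynomial.eval_X, add_zero, Polynomial.eval_natCast]
      obtain ⟨i, j⟩ := q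
      obtain ⟨jv, hjv⟩ := j
      by_cases hi : i = i₀
      · subst hi
        have hjv3 : jv < 3 := by omega
        have hCCi : CC i = 0 := by rw [hCC, CCfun_pos]
        interval_cases jv
        · have e : A ⟨i, (⟨0, hjv⟩ : Fin (a i + 1))⟩ = A ⟨i, ⟨0, by omega⟩⟩ := rfl
          rw [e, hα0, hCCi, hCB0]
          push_cast
          ring
        · have e : A ⟨i, (⟨1, hjv⟩ : Fin (a i + 1))⟩ = A ⟨i, ⟨1, by omega⟩⟩ := rfl
          rw [e, hCCi, hCB0]
          push_cast
          ring
        · have e : A ⟨i, (⟨2, hjv⟩ : Fin (a i + 1))⟩ = A ⟨i, ⟨2, by omega⟩⟩ := rfl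
          rw [e, hα2, hCCi, hCB0]
          push_cast
          linear_combination (lam + 0) * h2α1
      · have ha1 := h1 i hi
        have hjv2 : jv < 2 := by omega
        have hCCi : CC i = A ⟨i, ⟨0, by omega⟩⟩ := by
          rw [hCC, CCfun_neg A i₀ hi]
          rfl
        interval_cases jv
        · have e : A ⟨i, (⟨0, hjv⟩ : Fin (a i + 1))⟩ = A ⟨i, ⟨0, by omega⟩⟩ := rfl
          rw [e, hCCi, hCBne i hi]
          have e1 : A ⟨i, idx1 hge i⟩ = A ⟨i, ⟨1, by omega⟩⟩ := rfl
          have e0 : A ⟨i, idx0 i⟩ = A ⟨i, ⟨0, by omega⟩⟩ := rfl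
          rw [e1, e0]
          push_cast
          ring
        · have e : A ⟨i, (⟨1, hjv⟩ : Fin (a i + 1))⟩ = A ⟨i, ⟨1, by omega⟩⟩ := rfl
          rw [e, hCCi, hCBne i hi]
          have e1 : A ⟨i, idx1 hge i⟩ = A ⟨i, ⟨1, by omega⟩⟩ := rfl
          have e0 : A ⟨i, idx0 i⟩ = A ⟨i, ⟨0, by omega⟩⟩ := rfl
          rw [e1, e0]
          push_cast
          ring
    exact secant_tangent (cvec Γ lam) (hx0 lam) (hcone lam) Γε hΓcone hΓ0 hΓd hp
  have hdiff : Projectivization.mk K (cvec Γ 0) (hx0 0) ≠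
      Projectivization.mk K (cvec Γ 1) (hx0 1) := by
    intro heq
    rw [Projectivization.mk_eq_mk_iff] at heq
    obtain ⟨c, hc⟩ := heq
    rw [Units.smul_def] at hc
    have hcv : rulvec D (fun i => (CBp i).eval 0) 1 0
        = rulvec D (fun i => (c : K) * (CBp i).eval 1) 1 1 := by
      rw [← smul_rulvec, ← hxvec, ← hxvec, hc]
    have hz := rulvec_inj D i₀ h2 h1 (u := 1) (v := 1) (by norm_num) hcv
    have := hz i₀
    rw [hCB0 0] at this
    exact hα1 this
  exact curve_dimGE _ (fun lam _ => hx0 lam) Set.infinite_univ hmem 0 1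
    (Set.mem_univ 0) (Set.mem_univ 1) hdiff

end CaseB

section MainAssembly

variable {K : Type*} [Field K] {n : ℕ} {a : Fin n → ℕ}

def UA2 (A : ((i : Fin n) × Fin (a i + 1)) → K) (i₀ : Fin n) (hge : ∀ i, 1 ≤ a i) :
    Polynomial K :=
  Polynomial.C (A ⟨i₀, idx1 hge i₀⟩) - Polynomial.C (A ⟨i₀, idx0 i₀⟩) * Polynomial.X

def VA2 (A : ((i : Fin n) × Fin (a i + 1)) → K) {i₀ : Fin n} (hge : ∀ i, 1 ≤ a i)
    (h2 : a i₀ = 2) : Polynomial K :=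
  Polynomial.C (A ⟨i₀, idx2 h2⟩) - Polynomial.C (A ⟨i₀, idx1 hge i₀⟩) * Polynomial.X

def DA2 (A : ((i : Fin n) × Fin (a i + 1)) → K) {i₀ : Fin n} (hge : ∀ i, 1 ≤ a i)
    (h2 : a i₀ = 2) : Polynomial K :=
  Polynomial.C (A ⟨i₀, idx0 i₀⟩) * Polynomial.X ^ 2
    - Polynomial.C (2 * A ⟨i₀, idx1 hge i₀⟩) * Polynomial.X
    + Polynomial.C (A ⟨i₀, idx2 h2⟩)

def CXA2 (A : ((i : Fin n) × Fin (a i + 1)) → K) {i₀ : Fin n} (hge : ∀ i, 1 ≤ a i)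
    (h2 : a i₀ = 2) : Fin n → Polynomial K := fun i =>
  if i = i₀ then Polynomial.C (A ⟨i₀, idx0 i₀⟩) * DA2 A hge h2 - (UA2 A i₀ hge) ^ 2
  else Polynomial.C (A ⟨i, idx0 i⟩) * VA2 A hge h2
    - Polynomial.C (A ⟨i, idx1 hge i⟩) * UA2 A i₀ hge

def CYA2 (A : ((i : Fin n) × Fin (a i + 1)) → K) (i₀ : Fin n) (hge : ∀ i, 1 ≤ a i) :
    Fin n → Polynomial K := fun i =>
  if i = i₀ then 1
  else Polynomial.C (A ⟨i, idx1 hge i⟩) - Polynomial.C (A ⟨i, idx0 i⟩) * Polynomial.X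

def CXA1 (A : ((i : Fin n) × Fin (a i + 1)) → K) (i₀ : Fin n) : Fin n → Polynomial K :=
  fun i => if i = i₀ then 0 else Polynomial.C (A ⟨i, idx0 i⟩)

def CYA1 (A : ((i : Fin n) × Fin (a i + 1)) → K) (i₀ : Fin n) (hge : ∀ i, 1 ≤ a i) :
    Fin n → Polynomial K := fun i =>
  if i = i₀ then 0
  else Polynomial.C (A ⟨i, idx1 hge i⟩) - Polynomial.C (A ⟨i, idx0 i⟩) * Polynomial.X


end MainAssembly

/-- Let `X̃ = S(1,…,1,2) ⊆ ℙ^{2n}` (`n-1` ones and one `2`, `n ≥ 2`) and let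
`p ∈ ℙ^{2n} \ X̃`.  Then `dim Σ_p(X̃) ≥ 1`. -/
theorem secLocus_dim_ge_one {K : Type*} [Field K] [IsAlgClosed K]
    (n : ℕ) (hn : 2 ≤ n) (a : Fin n → ℕ)
    (ha : ∃ i₀ : Fin n, a i₀ = 2 ∧ ∀ i, i ≠ i₀ → a i = 1)
    (D : ScrollData K (2 * n) n a)
    (p : PS K (2 * n)) (hp : p ∉ D.carrier) :
    dimGE (secLocus D.carrier p) 1 := by
  obtain ⟨i₀, h2, h1⟩ := ha
  have hge : ∀ i, 1 ≤ a i := by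
    intro i
    by_cases hi : i = i₀
    · subst hi; omega
    · have := h1 i hi; omega
  -- linear coordinates of p with respect to the frame
  have hcard : Fintype.card ((i : Fin n) × Fin (a i + 1)) = 2 * n + 1 := by
    rw [Fintype.card_sigma]
    simp only [Fintype.card_fin]
    have hsum : ∑ i, a i = n + 1 := by
      rw [← Finset.add_sum_erase _ _ (Finset.mem_univ i₀), h2]
      have h11 : ∑ i ∈ Finset.univ.erase i₀, a i = ∑ _i ∈ Finset.univ.erase i₀, 1 :=
        Finset.sum_congr rfl fun i hi => h1 i (Finset.ne_of_mem_erase hi)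
      rw [h11, Finset.sum_const, smul_eq_mul, mul_one,
        Finset.card_erase_of_mem (Finset.mem_univ i₀), Finset.card_univ, Fintype.card_fin]
      omega
    have hsplit : ∑ i, (a i + 1) = (∑ i, a i) + n := by
      rw [Finset.sum_add_distrib, Finset.sum_const, smul_eq_mul, mul_one,
        Finset.card_univ, Fintype.card_fin]
    omega
  haveI : Nonempty ((i : Fin n) × Fin (a i + 1)) := ⟨⟨i₀, idx0 i₀⟩⟩
  have hspan : Submodule.span K
      (Set.range fun q : (i : Fin n) × Fin (a i + 1) => D.v q.1 q.2) = ⊤ := by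
    apply D.indep.span_eq_top_of_card_eq_finrank
    rw [hcard, Module.finrank_pi, Fintype.card_fin]
  obtain ⟨A, hA⟩ := (Submodule.mem_span_range_iff_exists_fun K).1
    (by rw [hspan]; exact Submodule.mem_top :
      p.rep ∈ Submodule.span K
        (Set.range fun q : (i : Fin n) × Fin (a i + 1) => D.v q.1 q.2))
  have hA' : comb D A = p.rep := hA
  by_cases hz : A ⟨i₀, ⟨0, by omega⟩⟩ = 0 ∧ 2 * A ⟨i₀, ⟨1, by omega⟩⟩ = 0 ∧
      A ⟨i₀, ⟨2, by omega⟩⟩ = 0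
  · by_cases hz1 : A ⟨i₀, ⟨1, by omega⟩⟩ = 0
    · -- Case A1 : p lies in the span of the `a i = 1` part
      apply caseA D i₀ h2 h1 p hp A hA' 0 1 1 (CXA1 A i₀) (CYA1 A i₀ hge)
      · intro lam; simp
      · have huniv : {lam : K | Polynomial.eval lam (1 : Polynomial K) ≠ 0} = Set.univ := by
          ext lam; simp
        rw [huniv]; exact Set.infinite_univ
      · intro lam q
        obtain ⟨i, j⟩ := q
        obtain ⟨jv, hjv⟩ := j
        by_cases hi : i = i₀
        · subst hi
          have hjv3 : jv < 3 := by omega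
          simp only [CXA1, CYA1, eq_self_iff_true, if_true, Polynomial.eval_zero,
            Polynomial.eval_one, zero_mul, one_mul, mul_zero, add_zero, zero_add]
          interval_cases jv
          · exact hz.1
          · exact hz1
          · exact hz.2.2
        · have ha1 := h1 i hi
          have hjv2 : jv < 2 := by omega
          simp only [CXA1, CYA1, if_neg hi, Polynomial.eval_one, Polynomial.eval_zero,
            Polynomial.eval_sub, Polynomial.eval_mul, Polynomial.eval_C, Polynomial.eval_X,
            one_mul, one_pow, mul_one]
          interval_cases jv
          · rw [show a i - 0 = 1 by omega]
            have e : A ⟨i, (⟨0, hjv⟩ : Fin (a i + 1))⟩ = A ⟨i, idx0 i⟩ := rfl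
            rw [e]
            ring
          · rw [show a i - 1 = 0 by omega]
            have e : A ⟨i, (⟨1, hjv⟩ : Fin (a i + 1))⟩ = A ⟨i, idx1 hge i⟩ := rfl
            rw [e]
            ring
    · exact caseB D i₀ h2 h1 p hp A hA' hz.1 hz.2.2 hz.2.1 hz1
  · -- Case A2 : the generic two-point secant construction
    have hΔne : DA2 A hge h2 ≠ 0 := by
      intro h0
      apply hz
      refine ⟨?_, ?_, ?_⟩
      · have := congrArg (fun q => Polynomial.coeff q 2) h0
        simp [DA2, Polynomial.coeff_C] at this; exact this
      · have := congrArg (fun q => Polynomial.coeff q 1) h0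
        simp [DA2, Polynomial.coeff_C] at this ⊢; exact this
      · have := congrArg (fun q => Polynomial.coeff q 0) h0
        simp [DA2, Polynomial.coeff_C] at this; exact this
    apply caseA D i₀ h2 h1 p hp A hA' (UA2 A i₀ hge) (VA2 A hge h2) (DA2 A hge h2)
      (CXA2 A hge h2) (CYA2 A i₀ hge)
    · intro lam
      simp only [DA2, UA2, VA2, Polynomial.eval_add, Polynomial.eval_sub,
        Polynomial.eval_mul, Polynomial.eval_pow, Polynomial.eval_C, Polynomial.eval_X]
      ring
    · have hc : {lam : K | Polynomial.eval lam (DA2 A hge h2) ≠ 0}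
          = {x : K | Polynomial.IsRoot (DA2 A hge h2) x}ᶜ := by
        ext lam; simp [Polynomial.IsRoot]
      rw [hc]
      exact (Polynomial.finite_setOf_isRoot hΔne).infinite_compl
    · intro lam q
      obtain ⟨i, j⟩ := q
      obtain ⟨jv, hjv⟩ := j
      by_cases hi : i = i₀
      · subst hi
        have hjv3 : jv < 3 := by omega
        simp only [CXA2, CYA2, eq_self_iff_true, if_true, DA2, UA2, VA2,
          Polynomial.eval_add, Polynomial.eval_sub, Polynomial.eval_mul, Polynomial.eval_pow,
          Polynomial.eval_C, Polynomial.eval_X, Polynomial.eval_one, one_mul]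
        interval_cases jv
        · rw [show a i - 0 = 2 by omega]
          have e : A ⟨i, (⟨0, hjv⟩ : Fin (a i + 1))⟩ = A ⟨i, idx0 i⟩ := rfl
          rw [e]
          ring
        · rw [show a i - 1 = 1 by omega]
          have e : A ⟨i, (⟨1, hjv⟩ : Fin (a i + 1))⟩ = A ⟨i, idx1 hge i⟩ := rfl
          rw [e]
          ring
        · rw [show a i - 2 = 0 by omega]
          have e : A ⟨i, (⟨2, hjv⟩ : Fin (a i + 1))⟩ = A ⟨i, idx2 h2⟩ := rfl
          rw [e]
          ring
      · have ha1 := h1 i hi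
        have hjv2 : jv < 2 := by omega
        simp only [CXA2, CYA2, if_neg hi, DA2, UA2, VA2, Polynomial.eval_add,
          Polynomial.eval_sub, Polynomial.eval_mul, Polynomial.eval_pow, Polynomial.eval_C,
          Polynomial.eval_X]
        interval_cases jv
        · rw [show a i - 0 = 1 by omega]
          have e : A ⟨i, (⟨0, hjv⟩ : Fin (a i + 1))⟩ = A ⟨i, idx0 i⟩ := rfl
          rw [e]
          ring
        · rw [show a i - 1 = 0 by omega]
          have e : A ⟨i, (⟨1, hjv⟩ : Fin (a i + 1))⟩ = A ⟨i, idx1 hge i⟩ := rfl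
          rw [e]
          ring


end SecantLoci
end
end

section
/- Let X̃ ⊆ P^{r+1} be a smooth rational normal scroll of codimension at least 2, and set A = ⟨S(1̲)⟩, B = Join(S(1̲), X̃), U = Join(A, Δ). Then X̃ ⊆ B, A ⊆ B ∩ U, and B ∪ U ⊆ Tan(X̃). -/
/-!
Common framework: projective space over an algebraically closed field, linear
subspaces, Zariski closure, tangent spaces, secant cones and secant loci,
rational normal scrolls (possibly cones) and their distinguished subvarieties.
-/

open Projectivization MvPolynomial

noncomputable section

/-! ## Auxiliary machinery for the proof -/

namespace SecantLoci

section Aux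

variable {K : Type*} [Field K] {N : ℕ}

lemma mem_linSet_iff {W : Submodule K (Fin (N + 1) → K)} {x : PS K N} :
    x ∈ linSet W ↔ x.rep ∈ W := by
  rw [linSet, Set.mem_setOf_eq, Projectivization.submodule_eq,
    Submodule.span_singleton_le_iff_mem]

lemma rep_mem_submodule (x : PS K N) : x.rep ∈ x.submodule := by
  rw [Projectivization.submodule_eq]
  exact Submodule.mem_span_singleton_self _

lemma lineThrough_rep {x y z : PS K N} (h : x ∈ lineThrough y z) :
    ∃ α β : K, x.rep = α • y.rep + β • z.rep := by
  have hx : x.rep ∈ (⨆ p ∈ ({y, z} : Set (PS K N)), p.submodule) :=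
    (mem_linSet_iff).1 h
  rw [iSup_pair] at hx
  obtain ⟨u, hu, v, hv, huv⟩ := Submodule.mem_sup.1 hx
  rw [Projectivization.submodule_eq] at hu hv
  obtain ⟨α, rfl⟩ := Submodule.mem_span_singleton.1 hu
  obtain ⟨β, rfl⟩ := Submodule.mem_span_singleton.1 hv
  exact ⟨α, β, huv.symm⟩

/-- A generic helper: pull a `dite`-sum over `Fin n` down to a sum over a subtype. -/
lemma sum_dite_subtype {n : ℕ} {p : Fin n → Prop} [DecidablePred p] {M : Type*}
    [AddCommMonoid M] (f : (i : Fin n) → p i → M) :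
    ∑ i : Fin n, (if h : p i then f i h else 0) = ∑ i : {i // p i}, f i.1 i.2 := by
  classical
  rw [← Finset.sum_filter_of_ne
    (p := p) (f := fun i => if h : p i then f i h else 0)
    (by intro i _ hne; by_contra hp; simp [dif_neg hp] at hne)]
  rw [Finset.sum_subtype (p := p) (Finset.univ.filter p) (fun x => by simp)
    (fun i => if h : p i then f i h else 0)]
  exact Finset.sum_congr rfl fun i _ => dif_pos i.2

lemma sum_fin_of_eq_one {M : Type*} [AddCommMonoid M] {m : ℕ} (h : m = 1)
    (f : Fin (m + 1) → M) :
    ∑ j, f j = f ⟨0, by omega⟩ + f ⟨1, by omega⟩ := by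
  subst h
  rw [Fin.sum_univ_two]
  rfl

lemma sum_fin_of_eq_two {M : Type*} [AddCommMonoid M] {m : ℕ} (h : m = 2)
    (f : Fin (m + 1) → M) :
    ∑ j, f j = f ⟨0, by omega⟩ + f ⟨1, by omega⟩ + f ⟨2, by omega⟩ := by
  subst h
  rw [Fin.sum_univ_three]
  rfl

open Polynomial in
lemma eval_aeval_poly_s11 {M : ℕ} (γ : Fin M → Polynomial K) (f : MvPolynomial (Fin M) K)
    (ε : K) :
    (MvPolynomial.aeval γ f).eval ε = MvPolynomial.eval (fun i => (γ i).eval ε) f := by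
  induction f using MvPolynomial.induction_on with
  | C a => simp
  | add p q hp hq => simp [hp, hq]
  | mul_X p i hp => simp [hp]

open Polynomial in
lemma derivative_aeval_mv {M : ℕ} (γ : Fin M → Polynomial K) (f : MvPolynomial (Fin M) K) :
    derivative (MvPolynomial.aeval γ f) =
      ∑ i, MvPolynomial.aeval γ (MvPolynomial.pderiv i f) * derivative (γ i) := by
  induction f using MvPolynomial.induction_on with
  | C a => simp
  | add p q hp hq => simp [hp, hq, Finset.sum_add_distrib, add_mul]
  | mul_X p i hp =>
    simp only [map_mul, MvPolynomial.aeval_X, derivative_mul, hp, MvPolynomial.pderiv_mul,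
      MvPolynomial.pderiv_X, map_add, add_mul, Finset.sum_add_distrib, Finset.sum_mul]
    refine congrArg₂ (· + ·) ?_ ?_
    · refine Finset.sum_congr rfl fun j _ => by ring
    · rw [Finset.sum_eq_single i]
      · simp
      · intro j _ hj
        simp [Pi.single_eq_of_ne hj.symm]
      · simp

lemma quad_root {K : Type*} [Field K] [IsAlgClosed K] (μ0 μ1 μ2 : K)
    (h : ¬(μ0 = 0 ∧ 2 * μ1 = 0 ∧ μ2 ≠ 0)) :
    ∃ t : K, μ0 * t ^ 2 - 2 * μ1 * t + μ2 = 0 := by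
  by_cases h0 : μ0 = 0
  · by_cases h1 : 2 * μ1 = 0
    · have h2 : μ2 = 0 := by tauto
      exact ⟨0, by simp [h0, h2]⟩
    · refine ⟨μ2 / (2 * μ1), ?_⟩
      rw [h0, mul_div_assoc', mul_div_cancel_left₀ _ h1]
      ring
  · obtain ⟨t, ht⟩ := IsAlgClosed.exists_root
      (Polynomial.C μ0 * Polynomial.X ^ 2 + Polynomial.C (-(2 * μ1)) * Polynomial.X +
        Polynomial.C μ2) (by rw [Polynomial.degree_quadratic h0]; decide)
    refine ⟨t, ?_⟩
    have := ht
    rw [Polynomial.IsRoot, Polynomial.eval_add, Polynomial.eval_add, Polynomial.eval_mul,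
      Polynomial.eval_mul, Polynomial.eval_pow, Polynomial.eval_C, Polynomial.eval_C,
      Polynomial.eval_C, Polynomial.eval_X] at this
    linear_combination this

end Aux

namespace ScrollData

variable {K : Type*} [Field K] {N n : ℕ} {a : Fin n → ℕ}

/-- Linear combination of the scroll's basis vectors with coefficient table `φ`. -/
def lc (D : ScrollData K N n a) (φ : (i : Fin n) → Fin (a i + 1) → K) :
    Fin (N + 1) → K :=
  ∑ i, ∑ j, φ i j • D.v i j

lemma lc_apply (D : ScrollData K N n a) (φ : (i : Fin n) → Fin (a i + 1) → K)
    (coord : Fin (N + 1)) :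
    D.lc φ coord = ∑ i, ∑ j, φ i j * D.v i j coord := by
  simp [lc, Finset.sum_apply]

lemma lc_eq_zero_iff (D : ScrollData K N n a) (φ : (i : Fin n) → Fin (a i + 1) → K) :
    D.lc φ = 0 ↔ ∀ i j, φ i j = 0 := by
  constructor
  · intro h i j
    have hs : ∑ q : (i : Fin n) × Fin (a i + 1), φ q.1 q.2 • D.v q.1 q.2 = 0 := by
      rw [← Finset.univ_sigma_univ, Finset.sum_sigma]
      exact h
    exact Fintype.linearIndependent_iff.mp D.indep (fun q => φ q.1 q.2) hs ⟨i, j⟩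
  · intro h
    simp [lc, h]

lemma lc_add (D : ScrollData K N n a) (φ ψ : (i : Fin n) → Fin (a i + 1) → K) :
    D.lc (fun i j => φ i j + ψ i j) = D.lc φ + D.lc ψ := by
  simp [lc, add_smul, Finset.sum_add_distrib]

lemma lc_smul (D : ScrollData K N n a) (r : K) (φ : (i : Fin n) → Fin (a i + 1) → K) :
    D.lc (fun i j => r * φ i j) = r • D.lc φ := by
  simp [lc, mul_smul, Finset.smul_sum]

/-- The parametrization of (the cone over) the scroll: `F s t c = ∑ i, c i • w i s t`. -/
def FF (D : ScrollData K N n a) (s t : K) (c : Fin n → K) : Fin (N + 1) → K :=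
  D.lc (fun i j => c i * (s ^ (a i - (j : ℕ)) * t ^ (j : ℕ)))

/-- The `s`-derivative of the parametrization. -/
def FFs (D : ScrollData K N n a) (s t : K) (c : Fin n → K) : Fin (N + 1) → K :=
  D.lc (fun i j => c i * ((((a i - (j : ℕ)) : ℕ) : K) * s ^ (a i - (j : ℕ) - 1) * t ^ (j : ℕ)))

/-- The `t`-derivative of the parametrization. -/
def FFt (D : ScrollData K N n a) (s t : K) (c : Fin n → K) : Fin (N + 1) → K :=
  D.lc (fun i j => c i * ((((j : ℕ)) : K) * s ^ (a i - (j : ℕ)) * t ^ ((j : ℕ) - 1)))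

lemma tangent_eq_lc (D : ScrollData K N n a) (s t σ τ : K) (c δ : Fin n → K) :
    D.FF s t δ + σ • D.FFs s t c + τ • D.FFt s t c = D.lc (fun i j =>
      δ i * (s ^ (a i - (j : ℕ)) * t ^ (j : ℕ))
      + σ * (c i * ((((a i - (j : ℕ)) : ℕ) : K) * s ^ (a i - (j : ℕ) - 1) * t ^ (j : ℕ)))
      + τ * (c i * ((((j : ℕ)) : K) * s ^ (a i - (j : ℕ)) * t ^ ((j : ℕ) - 1)))) := by
  rw [FF, FFs, FFt, ← lc_smul, ← lc_smul, ← lc_add, ← lc_add]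

lemma FF_eq_sum_w (D : ScrollData K N n a) (s t : K) (c : Fin n → K) :
    D.FF s t c = ∑ i, c i • D.w i s t := by
  simp [FF, lc, ScrollData.w, Finset.smul_sum, mul_smul]

lemma FF_smul (D : ScrollData K N n a) (s t r : K) (c : Fin n → K) :
    D.FF s t (r • c) = r • D.FF s t c := by
  rw [FF, FF, ← lc_smul]
  exact congrArg D.lc (by funext i j; simp [mul_assoc])

lemma FFs_smul (D : ScrollData K N n a) (s t r : K) (c : Fin n → K) :
    D.FFs s t (r • c) = r • D.FFs s t c := by
  rw [FFs, FFs, ← lc_smul]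
  exact congrArg D.lc (by funext i j; simp [mul_assoc])

lemma FFt_smul (D : ScrollData K N n a) (s t r : K) (c : Fin n → K) :
    D.FFt s t (r • c) = r • D.FFt s t c := by
  rw [FFt, FFt, ← lc_smul]
  exact congrArg D.lc (by funext i j; simp [mul_assoc])

lemma FFs_zero (D : ScrollData K N n a) (s t : K) : D.FFs s t 0 = 0 := by
  simp [FFs, lc]

lemma FFt_zero (D : ScrollData K N n a) (s t : K) : D.FFt s t 0 = 0 := by
  simp [FFt, lc]

lemma FF_ne_zero (D : ScrollData K N n a) {s t : K} (hst : (s, t) ≠ (0, 0))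
    {c : Fin n → K} (hc : c ≠ 0) : D.FF s t c ≠ 0 := by
  obtain ⟨i, hi⟩ := Function.ne_iff.1 hc
  intro h
  rw [FF] at h
  rw [lc_eq_zero_iff] at h
  by_cases hs : s = 0
  · have ht : t ≠ 0 := by
      intro ht; exact hst (by simp [hs, ht, Prod.ext_iff])
    have := h i ⟨a i, by omega⟩
    simp only [Nat.sub_self, pow_zero, one_mul] at this
    exact (mul_ne_zero hi (pow_ne_zero _ ht)) this
  · have := h i ⟨0, by omega⟩
    simp only [Nat.sub_zero, pow_zero, mul_one] at this
    exact (mul_ne_zero hi (pow_ne_zero _ hs)) this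

lemma mk_FF_mem_carrier (D : ScrollData K N n a) {s t : K} (hst : (s, t) ≠ (0, 0))
    (c : Fin n → K) (hF : D.FF s t c ≠ 0) :
    Projectivization.mk K (D.FF s t c) hF ∈ D.carrier := by
  refine Set.mem_iUnion.2 ⟨s, Set.mem_iUnion.2 ⟨t, Set.mem_iUnion.2 ⟨hst, ?_⟩⟩⟩
  simp only [ScrollData.ruling, linSet, Set.mem_setOf_eq, Projectivization.submodule_mk]
  rw [Submodule.span_singleton_le_iff_mem, FF_eq_sum_w]
  exact (Submodule.mem_span_range_iff_exists_fun K).2 ⟨c, rfl⟩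

lemma FF_mem_cone (D : ScrollData K N n a) (ha : ∀ i, 1 ≤ a i) (s t : K)
    (c : Fin n → K) : D.FF s t c ∈ cone D.carrier := by
  intro hv
  have hst : (s, t) ≠ (0, 0) := by
    rintro h
    apply hv
    injection h with hs ht
    subst hs; subst ht
    rw [FF]
    refine (D.lc_eq_zero_iff _).2 fun i j => ?_
    by_cases hj : (j : ℕ) = 0
    · have hne : a i - (j : ℕ) ≠ 0 := by have := ha i; omega
      simp [zero_pow hne]
    · simp [zero_pow hj]
  exact D.mk_FF_mem_carrier hst c hv

end ScrollData

namespace ScrollData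

variable {K : Type*} [Field K] {N n : ℕ} {a : Fin n → ℕ}

open Polynomial in
/-- Key analytic lemma: any vector in the span of the ruling together with the two
derivative directions at a point of the scroll lies in the Zariski tangent space there. -/
lemma mem_tangentSpace [IsAlgClosed K] (D : ScrollData K N n a) (ha : ∀ i, 1 ≤ a i)
    (s t : K) (c : Fin n → K) (hq : D.FF s t c ≠ 0) (σ τ : K) (δ : Fin n → K)
    (x : PS K N) (hx : x.rep = D.FF s t δ + σ • D.FFs s t c + τ • D.FFt s t c) :
    x ∈ tangentSpace D.carrier (Projectivization.mk K (D.FF s t c) hq) := by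
  intro f hf
  set q : PS K N := Projectivization.mk K (D.FF s t c) hq with hqdef
  obtain ⟨r, hr⟩ : ∃ r : Kˣ, (r : K) • D.FF s t c = q.rep :=
    (Projectivization.mk_eq_mk_iff K _ _ q.rep_nonzero hq).1
      ((Projectivization.mk_rep q).trans hqdef)
  have hrne : (r : K) ≠ 0 := r.ne_zero
  set σ' : K := (r : K)⁻¹ * σ with hσ'
  set τ' : K := (r : K)⁻¹ * τ with hτ'
  set c' : Fin n → K := (r : K) • c with hc'
  have hqrep : q.rep = D.FF s t c' := by rw [hc', FF_smul, hr]
  have hdir : x.rep = D.FF s t δ + σ' • D.FFs s t c' + τ' • D.FFt s t c' := by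
    rw [hx, hc', FFs_smul, FFt_smul, smul_smul, smul_smul]
    have h1 : σ' * (r : K) = σ := by rw [hσ']; field_simp
    have h2 : τ' * (r : K) = τ := by rw [hτ']; field_simp
    rw [h1, h2]
  classical
  set γ : Fin (N + 1) → Polynomial K := fun coord =>
    ∑ i : Fin n, ∑ j : Fin (a i + 1),
      ((Polynomial.C (c' i) + Polynomial.C (δ i) * Polynomial.X) *
        ((Polynomial.C s + Polynomial.C σ' * Polynomial.X) ^ (a i - (j : ℕ)) *
         (Polynomial.C t + Polynomial.C τ' * Polynomial.X) ^ (j : ℕ))) *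
        Polynomial.C (D.v i j coord) with hγ
  have hγeval : ∀ ε : K, (fun coord => (γ coord).eval ε) =
      D.FF (s + ε * σ') (t + ε * τ') (c' + ε • δ) := by
    intro ε
    funext coord
    rw [hγ]
    rw [Polynomial.eval_finset_sum]
    rw [FF, lc_apply]
    refine Finset.sum_congr rfl fun i _ => ?_
    rw [Polynomial.eval_finset_sum]
    refine Finset.sum_congr rfl fun j _ => ?_
    simp only [Polynomial.eval_mul, Polynomial.eval_add, Polynomial.eval_pow,
      Polynomial.eval_C, Polynomial.eval_X, Pi.add_apply, Pi.smul_apply, smul_eq_mul]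
    ring
  have hg0 : MvPolynomial.aeval γ f = 0 := by
    refine Polynomial.funext (q := 0) fun ε => ?_
    rw [Polynomial.eval_zero, eval_aeval_poly_s11, hγeval ε]
    exact hf _ (D.FF_mem_cone ha _ _ _)
  have hder : Polynomial.eval 0 (Polynomial.derivative (MvPolynomial.aeval γ f)) = 0 := by
    rw [hg0]; simp
  rw [derivative_aeval_mv, Polynomial.eval_finset_sum] at hder
  simp only [Polynomial.eval_mul] at hder
  have heval0 : (fun coord => (γ coord).eval 0) = q.rep := by
    rw [hγeval 0, hqrep]
    simp
  have hderγ : ∀ coord, (Polynomial.derivative (γ coord)).eval 0 = x.rep coord := by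
    intro coord
    rw [hdir, tangent_eq_lc, lc_apply, hγ]
    rw [Polynomial.derivative_sum, Polynomial.eval_finset_sum]
    refine Finset.sum_congr rfl fun i _ => ?_
    rw [Polynomial.derivative_sum, Polynomial.eval_finset_sum]
    refine Finset.sum_congr rfl fun j _ => ?_
    simp only [Polynomial.derivative_mul, Polynomial.derivative_pow, Polynomial.derivative_add,
      Polynomial.derivative_C, Polynomial.derivative_X, Polynomial.eval_add, Polynomial.eval_mul,
      Polynomial.eval_pow, Polynomial.eval_C, Polynomial.eval_X, mul_zero, zero_mul, add_zero,
      zero_add, mul_one, one_mul]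
    ring
  calc ∑ i, x.rep i * MvPolynomial.eval q.rep (MvPolynomial.pderiv i f)
      = ∑ i, (MvPolynomial.aeval γ (MvPolynomial.pderiv i f)).eval 0 *
          (Polynomial.derivative (γ i)).eval 0 := by
        refine Finset.sum_congr rfl fun i _ => ?_
        rw [eval_aeval_poly_s11, heval0, hderγ]
        ring
    _ = 0 := hder

/-- Driver lemma: a projective point whose representative lies in the span of a ruling
plus the derivative directions is in the union of the tangent spaces. -/
lemma mem_T_of [IsAlgClosed K] (D : ScrollData K N n a) (ha : ∀ i, 1 ≤ a i)
    (hn : 0 < n) (s t : K) (hst : (s, t) ≠ (0, 0)) (c δ : Fin n → K) (σ τ : K)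
    (x : PS K N) (hx : x.rep = D.FF s t δ + σ • D.FFs s t c + τ • D.FFt s t c) :
    x ∈ ⋃ q ∈ D.carrier, tangentSpace D.carrier q := by
  by_cases hc : c = 0
  · have hx' : x.rep = D.FF s t δ + (0 : K) • D.FFs s t (Pi.single ⟨0, hn⟩ 1) +
        (0 : K) • D.FFt s t (Pi.single ⟨0, hn⟩ 1) := by
      rw [hx, hc]
      simp [FFs_zero, FFt_zero]
    have hsing : (Pi.single ⟨0, hn⟩ 1 : Fin n → K) ≠ 0 :=
      Function.ne_iff.2 ⟨⟨0, hn⟩, by simp⟩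
    have hF : D.FF s t (Pi.single ⟨0, hn⟩ 1) ≠ 0 := D.FF_ne_zero hst hsing
    exact Set.mem_biUnion (D.mk_FF_mem_carrier hst _ hF)
      (D.mem_tangentSpace ha s t _ hF 0 0 δ x hx')
  · have hF : D.FF s t c ≠ 0 := D.FF_ne_zero hst hc
    exact Set.mem_biUnion (D.mk_FF_mem_carrier hst c hF)
      (D.mem_tangentSpace ha s t c hF σ τ δ x hx)

end ScrollData

namespace ScrollData

variable {K : Type*} [Field K] {N n : ℕ} {a : Fin n → ℕ}

lemma exists_rep_carrier (D : ScrollData K N n a) {z : PS K N} (hz : z ∈ D.carrier) :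
    ∃ s t : K, (s, t) ≠ (0, 0) ∧ ∃ d : Fin n → K, z.rep = D.FF s t d := by
  simp only [carrier, ruling, Set.mem_iUnion] at hz
  obtain ⟨s, t, hst, hz⟩ := hz
  rw [mem_linSet_iff] at hz
  obtain ⟨d, hd⟩ := (Submodule.mem_span_range_iff_exists_fun K).1 hz
  exact ⟨s, t, hst, d, by rw [FF_eq_sum_w, hd]⟩

lemma exists_rep_sub1 (D : ScrollData K N n a) {y : PS K N} (hy : y ∈ D.sub1) :
    ∃ s t : K, (s, t) ≠ (0, 0) ∧ ∃ c : Fin n → K,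
      (∀ i, a i ≠ 1 → c i = 0) ∧ y.rep = D.FF s t c := by
  classical
  simp only [sub1, Set.mem_iUnion] at hy
  obtain ⟨s, t, hst, hy⟩ := hy
  rw [mem_linSet_iff] at hy
  obtain ⟨co, hco⟩ := (Submodule.mem_span_range_iff_exists_fun K).1 hy
  refine ⟨s, t, hst, fun i => if h : a i = 1 then co ⟨i, h⟩ else 0,
    fun i h => dif_neg h, ?_⟩
  rw [FF_eq_sum_w, ← hco,
    ← sum_dite_subtype (p := fun i => a i = 1) (fun i h => co ⟨i, h⟩ • D.w i s t)]
  refine Finset.sum_congr rfl fun i _ => ?_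
  split <;> simp

lemma sub1_subset_carrier (D : ScrollData K N n a) : D.sub1 ⊆ D.carrier := by
  intro y hy
  simp only [sub1, Set.mem_iUnion] at hy
  obtain ⟨s, t, hst, hy⟩ := hy
  simp only [carrier, ruling, Set.mem_iUnion]
  refine ⟨s, t, hst, ?_⟩
  rw [mem_linSet_iff] at hy ⊢
  refine Submodule.span_mono ?_ hy
  rintro _ ⟨i, rfl⟩
  exact ⟨i.1, rfl⟩

lemma FF_zero_fun (D : ScrollData K N n a) (s t : K) : D.FF s t (0 : Fin n → K) = 0 := by
  rw [FF]
  exact (D.lc_eq_zero_iff _).2 fun i j => by simp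

lemma onesupp_FF_eq (D : ScrollData K N n a) {c : Fin n → K}
    (hsupp : ∀ i, a i ≠ 1 → c i = 0) (s₀ t₀ s₁ t₁ : K) :
    D.FF s₀ t₀ c = s₀ • D.FFs s₁ t₁ c + t₀ • D.FFt s₁ t₁ c := by
  have h := D.tangent_eq_lc s₁ t₁ s₀ t₀ c 0
  rw [FF_zero_fun, zero_add] at h
  rw [h, FF]
  refine congrArg D.lc ?_
  funext i j
  by_cases h1 : a i = 1
  · obtain ⟨jv, hj⟩ := j
    have hj2 : jv < 2 := by omega
    interval_cases jv <;> simp [h1] <;> ring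
  · simp [hsupp i h1]

/-- The family of basis vectors spanning `⟨S(1̲)⟩`. -/
def g1 (D : ScrollData K N n a) : {i : Fin n // a i = 1} × Fin 2 → (Fin (N + 1) → K) :=
  fun p => D.v p.1.1 ⟨(p.2 : ℕ), by have h1 := p.1.2; have h2 := p.2.isLt; omega⟩

lemma w_of_eq_one (D : ScrollData K N n a) {i : Fin n} (h : a i = 1) (s t : K) :
    D.w i s t = s • D.v i ⟨0, by omega⟩ + t • D.v i ⟨1, by omega⟩ := by
  rw [ScrollData.w, sum_fin_of_eq_one h]
  simp [h]

lemma w_one_zero (D : ScrollData K N n a) (i : Fin n) :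
    D.w i 1 0 = D.v i ⟨0, by omega⟩ := by
  rw [ScrollData.w]
  rw [Finset.sum_eq_single (⟨0, by omega⟩ : Fin (a i + 1))]
  · simp
  · intro j _ hj
    have hne : (j : ℕ) ≠ 0 := fun h => hj (Fin.ext h)
    simp [zero_pow hne]
  · simp

lemma w_zero_one (D : ScrollData K N n a) (i : Fin n) :
    D.w i 0 1 = D.v i ⟨a i, by omega⟩ := by
  rw [ScrollData.w]
  rw [Finset.sum_eq_single (⟨a i, by omega⟩ : Fin (a i + 1))]
  · simp
  · intro j _ hj
    have hne : a i - (j : ℕ) ≠ 0 := by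
      have h1 : (j : ℕ) ≠ a i := fun h => hj (Fin.ext h)
      have h2 := j.isLt
      omega
    simp [zero_pow hne]
  · simp

lemma projSpan_sub1_rep (D : ScrollData K N n a) {x : PS K N}
    (hx : x ∈ projSpan D.sub1) :
    ∃ co : {i : Fin n // a i = 1} × Fin 2 → K, x.rep = ∑ p, co p • D.g1 p := by
  have hmem : x.rep ∈ (⨆ y ∈ D.sub1, Projectivization.submodule y) := mem_linSet_iff.1 hx
  have hle : (⨆ y ∈ D.sub1, Projectivization.submodule y) ≤
      Submodule.span K (Set.range D.g1) := by
    refine iSup₂_le fun y hy => ?_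
    simp only [sub1, Set.mem_iUnion] at hy
    obtain ⟨s, t, hst, hy⟩ := hy
    refine le_trans hy (Submodule.span_le.2 ?_)
    rintro _ ⟨i, rfl⟩
    show D.w i.1 s t ∈ (Submodule.span K (Set.range D.g1) : Set (Fin (N + 1) → K))
    rw [D.w_of_eq_one i.2]
    exact Submodule.add_mem _
      (Submodule.smul_mem _ _ (Submodule.subset_span ⟨(i, 0), rfl⟩))
      (Submodule.smul_mem _ _ (Submodule.subset_span ⟨(i, 1), rfl⟩))
  obtain ⟨co, hco⟩ := (Submodule.mem_span_range_iff_exists_fun K).1 (hle hmem)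
  exact ⟨co, hco.symm⟩

variable (a) in
/-- Coefficient table of a point of `⟨S(1̲)⟩`. -/
def phiA (co : {i : Fin n // a i = 1} × Fin 2 → K) :
    (i : Fin n) → Fin (a i + 1) → K := fun i j =>
  if (j : ℕ) = 0 then (if h : a i = 1 then co (⟨i, h⟩, 0) else 0)
  else if (j : ℕ) = 1 then (if h : a i = 1 then co (⟨i, h⟩, 1) else 0) else 0

variable (a) in
/-- Coefficient table of a point of (the cone over) `Δ`. -/
def phiD (bh : Fin n → K) (μ : Fin 3 → K) :
    (i : Fin n) → Fin (a i + 1) → K := fun i j =>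
  bh i * (if (j : ℕ) = 0 then μ 0 else if (j : ℕ) = 1 then μ 1 else μ 2)

lemma rep_eq_lc_of_A (D : ScrollData K N n a)
    (co : {i : Fin n // a i = 1} × Fin 2 → K) {x : PS K N}
    (hrep : x.rep = ∑ p, co p • D.g1 p) :
    x.rep = D.lc (phiA a co) := by
  classical
  rw [hrep, lc, Fintype.sum_prod_type]
  have step1 : ∀ i : Fin n, (∑ j : Fin (a i + 1), phiA a co i j • D.v i j) =
      (if h : a i = 1 then
        ∑ e : Fin 2, co (⟨i, h⟩, e) • D.g1 (⟨i, h⟩, e) else 0) := by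
    intro i
    by_cases h : a i = 1
    · rw [dif_pos h, sum_fin_of_eq_one h, Fin.sum_univ_two]
      simp [phiA, g1, h]
    · rw [dif_neg h]
      refine Finset.sum_eq_zero fun j _ => ?_
      simp [phiA, h]
  calc (∑ i : {i // a i = 1}, ∑ e : Fin 2, co (i, e) • D.g1 (i, e))
      = ∑ i : Fin n, (if h : a i = 1 then
          ∑ e : Fin 2, co (⟨i, h⟩, e) • D.g1 (⟨i, h⟩, e) else 0) := by
        rw [sum_dite_subtype (p := fun i => a i = 1)
          (f := fun i h => ∑ e : Fin 2, co (⟨i, h⟩, e) • D.g1 (⟨i, h⟩, e))]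
    _ = ∑ i : Fin n, ∑ j : Fin (a i + 1), phiA a co i j • D.v i j :=
        Finset.sum_congr rfl fun i _ => (step1 i).symm

lemma exists_rep_delta (D : ScrollData K N n a) {z : PS K N} (hz : z ∈ D.delta) :
    ∃ bh : Fin n → K, (∀ i, a i ≠ 2 → bh i = 0) ∧
      ∃ μ : Fin 3 → K, z.rep = D.lc (phiD a bh μ) := by
  classical
  simp only [delta, Set.mem_iUnion] at hz
  obtain ⟨β, hβ, hz⟩ := hz
  rw [mem_linSet_iff] at hz
  obtain ⟨μ, hμ⟩ := (Submodule.mem_span_range_iff_exists_fun K).1 hz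
  refine ⟨fun i => if h : a i = 2 then β ⟨i, h⟩ else 0, fun i h => dif_neg h, μ, ?_⟩
  rw [← hμ, lc]
  have step1 : ∀ i : Fin n,
      (∑ j : Fin (a i + 1), phiD a (fun i => if h : a i = 2 then β ⟨i, h⟩ else 0) μ i j • D.v i j) =
      (if h : a i = 2 then
        (∑ j : Fin 3, μ j • β ⟨i, h⟩ •
          D.v i ⟨(j : ℕ), by have := j.isLt; omega⟩) else 0) := by
    intro i
    by_cases h : a i = 2
    · rw [dif_pos h, sum_fin_of_eq_two h, Fin.sum_univ_three]
      simp [phiD, h, smul_smul, mul_comm]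
    · rw [dif_neg h]
      refine Finset.sum_eq_zero fun j _ => ?_
      simp [phiD, h]
  calc ∑ j : Fin 3, μ j • ∑ i : {i // a i = 2}, β i •
        D.v i.1 ⟨(j : ℕ), by have h1 := i.2; have h2 := j.isLt; omega⟩
      = ∑ i : {i // a i = 2}, ∑ j : Fin 3, μ j • β i •
          D.v i.1 ⟨(j : ℕ), by have h1 := i.2; have h2 := j.isLt; omega⟩ := by
        simp only [Finset.smul_sum]
        exact Finset.sum_comm
    _ = ∑ i : Fin n, (if h : a i = 2 then
          (∑ j : Fin 3, μ j • β ⟨i, h⟩ •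
            D.v i ⟨(j : ℕ), by have := j.isLt; omega⟩) else 0) := by
        rw [sum_dite_subtype (p := fun i => a i = 2)
          (f := fun i h => ∑ j : Fin 3, μ j • β ⟨i, h⟩ •
            D.v i ⟨(j : ℕ), by have := j.isLt; omega⟩)]
    _ = ∑ i : Fin n, ∑ j : Fin (a i + 1),
          phiD a (fun i => if h : a i = 2 then β ⟨i, h⟩ else 0) μ i j • D.v i j :=
        Finset.sum_congr rfl fun i _ => (step1 i).symm

end ScrollData

namespace ScrollData

variable {K : Type*} [Field K] {N n : ℕ} {a : Fin n → ℕ}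

lemma key4 [IsAlgClosed K] (D : ScrollData K N n a) (ha : ∀ i, 1 ≤ a i) (hn : 0 < n)
    (xv yv bh : Fin n → K) (hxv : ∀ i, a i ≠ 1 → xv i = 0) (hyv : ∀ i, a i ≠ 1 → yv i = 0)
    (hbh : ∀ i, a i ≠ 2 → bh i = 0) (μ0 μ1 μ2 : K) (x : PS K N)
    (hx : x.rep = D.lc (fun i j =>
      (if (j : ℕ) = 0 then xv i else if (j : ℕ) = 1 then yv i else 0) +
        bh i * (if (j : ℕ) = 0 then μ0 else if (j : ℕ) = 1 then μ1 else μ2))) :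
    x ∈ ⋃ q ∈ D.carrier, tangentSpace D.carrier q := by
  by_cases hexc : μ0 = 0 ∧ 2 * μ1 = 0 ∧ μ2 ≠ 0
  · obtain ⟨h0, h1, h2⟩ := hexc
    refine D.mem_T_of ha hn 0 1 (by simp) (fun i => xv i + μ1 * bh i)
      (fun i => yv i + μ2 * bh i) 1 0 x ?_
    rw [hx, tangent_eq_lc]
    refine congrArg D.lc ?_
    funext i j
    by_cases ha1 : a i = 1
    · have hb0 : bh i = 0 := hbh i (by omega)
      obtain ⟨jv, hj⟩ := j
      have hj2 : jv < 2 := by omega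
      interval_cases jv
      · simp [ha1, hb0]
      · simp [ha1, hb0]
    · by_cases ha2 : a i = 2
      · have hx0 : xv i = 0 := hxv i (by omega)
        have hy0 : yv i = 0 := hyv i (by omega)
        obtain ⟨jv, hj⟩ := j
        have hj3 : jv < 3 := by omega
        interval_cases jv
        · simp [ha2, hx0, hy0, h0]
        · simp [ha2, hx0, hy0, mul_comm]
        · simp [ha2, hx0, hy0, mul_comm]
      · simp [hxv i ha1, hyv i ha1, hbh i ha2]
  · obtain ⟨t₀, ht₀⟩ := quad_root μ0 μ1 μ2 hexc
    by_cases hb : μ1 - μ0 * t₀ = 0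
    · have hμ1 : μ1 = μ0 * t₀ := by linear_combination hb
      have hμ2 : μ2 = μ0 * t₀ ^ 2 := by linear_combination ht₀ + 2 * t₀ * hb
      refine D.mem_T_of ha hn 1 t₀ (by simp) (fun i => yv i - t₀ * xv i)
        (fun i => xv i + μ0 * bh i) 0 1 x ?_
      rw [hx, tangent_eq_lc]
      refine congrArg D.lc ?_
      funext i j
      by_cases ha1 : a i = 1
      · have hb0 : bh i = 0 := hbh i (by omega)
        obtain ⟨jv, hj⟩ := j
        have hj2 : jv < 2 := by omega
        interval_cases jv
        · simp [ha1, hb0]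
        · simp [ha1, hb0]
          ring
      · by_cases ha2 : a i = 2
        · have hx0 : xv i = 0 := hxv i (by omega)
          have hy0 : yv i = 0 := hyv i (by omega)
          obtain ⟨jv, hj⟩ := j
          have hj3 : jv < 3 := by omega
          interval_cases jv
          · simp [ha2, hx0, hy0, mul_comm]
          · simp [ha2, hx0, hy0]
            linear_combination bh i * hμ1
          · simp [ha2, hx0, hy0]
            linear_combination bh i * hμ2
        · simp [hxv i ha1, hyv i ha1, hbh i ha2]
    · refine D.mem_T_of ha hn 1 t₀ (by simp)
        (fun i => (yv i - t₀ * xv i) / (μ1 - μ0 * t₀) + bh i)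
        (fun i => xv i + μ0 * bh i) 0 (μ1 - μ0 * t₀) x ?_
      rw [hx, tangent_eq_lc]
      refine congrArg D.lc ?_
      funext i j
      by_cases ha1 : a i = 1
      · have hb0 : bh i = 0 := hbh i (by omega)
        obtain ⟨jv, hj⟩ := j
        have hj2 : jv < 2 := by omega
        interval_cases jv
        · simp [ha1, hb0]
        · simp [ha1, hb0]
          have hd : -(t₀ * μ0) + μ1 ≠ 0 := fun h => hb (by linear_combination h)
          linear_combination -(yv i - xv i * t₀) * mul_inv_cancel₀ hd
      · by_cases ha2 : a i = 2
        · have hx0 : xv i = 0 := hxv i (by omega)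
          have hy0 : yv i = 0 := hyv i (by omega)
          obtain ⟨jv, hj⟩ := j
          have hj3 : jv < 3 := by omega
          interval_cases jv
          · simp [ha2, hx0, hy0, mul_comm]
          · simp [ha2, hx0, hy0]
            ring
          · simp [ha2, hx0, hy0]
            linear_combination bh i * ht₀
        · simp [hxv i ha1, hyv i ha1, hbh i ha2]

lemma carrier_subset_T [IsAlgClosed K] (D : ScrollData K N n a) (ha : ∀ i, 1 ≤ a i)
    (hn : 0 < n) : D.carrier ⊆ ⋃ q ∈ D.carrier, tangentSpace D.carrier q := by
  intro x hx
  obtain ⟨s, t, hst, d, hxr⟩ := D.exists_rep_carrier hx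
  refine D.mem_T_of ha hn s t hst 0 d 0 0 x ?_
  rw [hxr]
  simp [FFs_zero, FFt_zero]

lemma chord1_mem_T [IsAlgClosed K] (D : ScrollData K N n a) (ha : ∀ i, 1 ≤ a i)
    (hn : 0 < n) {x y z : PS K N} (hy : y ∈ D.sub1) (hz : z ∈ D.carrier)
    (hx : x ∈ lineThrough y z) :
    x ∈ ⋃ q ∈ D.carrier, tangentSpace D.carrier q := by
  obtain ⟨s₀, t₀, hst₀, c, hsupp, hyr⟩ := D.exists_rep_sub1 hy
  obtain ⟨s₁, t₁, hst₁, d, hzr⟩ := D.exists_rep_carrier hz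
  obtain ⟨α, β, hxr⟩ := lineThrough_rep hx
  refine D.mem_T_of ha hn s₁ t₁ hst₁ c (β • d) (α * s₀) (α * t₀) x ?_
  rw [hxr, hyr, hzr, FF_smul, D.onesupp_FF_eq hsupp s₀ t₀ s₁ t₁]
  module

lemma A_mem_T [IsAlgClosed K] (D : ScrollData K N n a) (ha : ∀ i, 1 ≤ a i)
    (hn : 0 < n) {x : PS K N} (hx : x ∈ projSpan D.sub1) :
    x ∈ ⋃ q ∈ D.carrier, tangentSpace D.carrier q := by
  classical
  obtain ⟨co, hco⟩ := D.projSpan_sub1_rep hx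
  have hlc := D.rep_eq_lc_of_A co hco
  refine D.key4 ha hn (fun i => if h : a i = 1 then co (⟨i, h⟩, 0) else 0)
    (fun i => if h : a i = 1 then co (⟨i, h⟩, 1) else 0) 0
    (fun i h => dif_neg h) (fun i h => dif_neg h) (fun i _ => rfl) 0 0 0 x ?_
  rw [hlc]
  refine congrArg D.lc ?_
  funext i j
  simp [phiA]

lemma delta_mem_T [IsAlgClosed K] (D : ScrollData K N n a) (ha : ∀ i, 1 ≤ a i)
    (hn : 0 < n) {x : PS K N} (hx : x ∈ D.delta) :
    x ∈ ⋃ q ∈ D.carrier, tangentSpace D.carrier q := by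
  obtain ⟨bh, hbh, μ, hlc⟩ := D.exists_rep_delta hx
  refine D.key4 ha hn 0 0 bh (fun i _ => rfl) (fun i _ => rfl) hbh (μ 0) (μ 1) (μ 2) x ?_
  rw [hlc]
  refine congrArg D.lc ?_
  funext i j
  simp [phiD]

lemma chord2_mem_T [IsAlgClosed K] (D : ScrollData K N n a) (ha : ∀ i, 1 ≤ a i)
    (hn : 0 < n) {x y z : PS K N} (hy : y ∈ projSpan D.sub1) (hz : z ∈ D.delta)
    (hx : x ∈ lineThrough y z) :
    x ∈ ⋃ q ∈ D.carrier, tangentSpace D.carrier q := by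
  classical
  obtain ⟨co, hco⟩ := D.projSpan_sub1_rep hy
  have hylc := D.rep_eq_lc_of_A co hco
  obtain ⟨bh, hbh, μ, hzlc⟩ := D.exists_rep_delta hz
  obtain ⟨α, β, hxr⟩ := lineThrough_rep hx
  refine D.key4 ha hn (fun i => α * (if h : a i = 1 then co (⟨i, h⟩, 0) else 0))
    (fun i => α * (if h : a i = 1 then co (⟨i, h⟩, 1) else 0)) bh
    (fun i h => by simp [dif_neg h]) (fun i h => by simp [dif_neg h]) hbh
    (β * μ 0) (β * μ 1) (β * μ 2) x ?_
  rw [hxr, hylc, hzlc, ← lc_smul, ← lc_smul, ← lc_add]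
  refine congrArg D.lc ?_
  funext i j
  simp only [phiA, phiD]
  split_ifs <;> ring

lemma projSpan_sub1_subset_join (D : ScrollData K N n a) :
    projSpan D.sub1 ⊆ join D.sub1 D.carrier := by
  classical
  intro x hx
  obtain ⟨co, hco⟩ := D.projSpan_sub1_rep hx
  set u1 : Fin (N + 1) → K := ∑ i : {i // a i = 1}, co (i, 0) • D.w i.1 1 0 with hu1
  set u2 : Fin (N + 1) → K := ∑ i : {i // a i = 1}, co (i, 1) • D.w i.1 0 1 with hu2
  have hrep : x.rep = u1 + u2 := by
    rw [hco, Fintype.sum_prod_type, hu1, hu2, ← Finset.sum_add_distrib]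
    refine Finset.sum_congr rfl fun i _ => ?_
    rw [Fin.sum_univ_two]
    congr 1
    · rw [D.w_one_zero]
      rfl
    · rw [D.w_zero_one]
      show co (i, 1) • D.v i.1 ⟨1, by omega⟩ = _
      have he : (⟨1, by omega⟩ : Fin (a i.1 + 1)) = ⟨a i.1, by omega⟩ := Fin.ext i.2.symm
      rw [he]
  have hmem1 : u1 ∈ Submodule.span K
      (Set.range fun i : {i : Fin n // a i = 1} => D.w i.1 1 0) :=
    (Submodule.mem_span_range_iff_exists_fun K).2 ⟨fun i => co (i, 0), rfl⟩
  have hmem2 : u2 ∈ Submodule.span K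
      (Set.range fun i : {i : Fin n // a i = 1} => D.w i.1 0 1) :=
    (Submodule.mem_span_range_iff_exists_fun K).2 ⟨fun i => co (i, 1), rfl⟩
  by_cases h1 : u1 = 0
  · refine subset_zcl _ (Set.mem_union_left _ (Set.mem_union_left _ ?_))
    simp only [sub1, Set.mem_iUnion]
    refine ⟨0, 1, by simp, ?_⟩
    rw [mem_linSet_iff, hrep, h1, zero_add]
    exact hmem2
  · by_cases h2 : u2 = 0
    · refine subset_zcl _ (Set.mem_union_left _ (Set.mem_union_left _ ?_))
      simp only [sub1, Set.mem_iUnion]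
      refine ⟨1, 0, by simp, ?_⟩
      rw [mem_linSet_iff, hrep, h2, add_zero]
      exact hmem1
    · refine subset_zcl _ (Set.mem_union_right _ ?_)
      have hy : Projectivization.mk K u1 h1 ∈ D.sub1 := by
        simp only [sub1, Set.mem_iUnion]
        refine ⟨1, 0, by simp, ?_⟩
        simp only [linSet, Set.mem_setOf_eq, Projectivization.submodule_mk]
        rw [Submodule.span_singleton_le_iff_mem]
        exact hmem1
      have hz : Projectivization.mk K u2 h2 ∈ D.sub1 := by
        simp only [sub1, Set.mem_iUnion]
        refine ⟨0, 1, by simp, ?_⟩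
        simp only [linSet, Set.mem_setOf_eq, Projectivization.submodule_mk]
        rw [Submodule.span_singleton_le_iff_mem]
        exact hmem2
      refine Set.mem_biUnion hy (Set.mem_biUnion (D.sub1_subset_carrier hz) ?_)
      show x ∈ linSet _
      rw [mem_linSet_iff, iSup_pair, hrep]
      refine Submodule.add_mem _ (Submodule.mem_sup_left ?_) (Submodule.mem_sup_right ?_)
      · rw [Projectivization.submodule_mk]
        exact Submodule.mem_span_singleton_self _
      · rw [Projectivization.submodule_mk]
        exact Submodule.mem_span_singleton_self _

end ScrollData


end SecantLoci


/-! ## Statement 11 (Theorem 4.2, inclusions): `X̃ ⊆ B`, `A ⊆ B ∩ U`, `B ∪ U ⊆ Tan(X̃)` -/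

namespace SecantLoci

/-- Let `X̃ ⊆ ℙ^{r+1}` be a smooth rational normal scroll of codimension at least 2 and
set `A = ⟨S(1̲)⟩`, `B = Join(S(1̲), X̃)`, `U = Join(A, Δ)`.  Then `X̃ ⊆ B`,
`A ⊆ B ∩ U` and `B ∪ U ⊆ Tan(X̃)`. -/
theorem scroll_stratification_inclusions {K : Type*} [Field K] [IsAlgClosed K]
    {N n : ℕ} {a : Fin n → ℕ}
    (D : ScrollData K N n a) (ha : ∀ i, 1 ≤ a i)
    (htot : N + 1 = ∑ i, (a i + 1)) (hcodim : n + 2 ≤ N) :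
    D.carrier ⊆ join D.sub1 D.carrier ∧
      projSpan D.sub1 ⊆ join D.sub1 D.carrier ∩ join (projSpan D.sub1) D.delta ∧
      join D.sub1 D.carrier ∪ join (projSpan D.sub1) D.delta ⊆
        tanVariety D.carrier := by
  classical
  have hn : 0 < n := by
    rcases Nat.eq_zero_or_pos n with h | h
    · subst h
      simp at htot
    · exact h
  refine ⟨?_, ?_, ?_⟩
  · intro x hx
    exact subset_zcl _ (Set.mem_union_left _ (Set.mem_union_right _ hx))
  · intro x hx
    exact ⟨D.projSpan_sub1_subset_join hx,
      subset_zcl _ (Set.mem_union_left _ (Set.mem_union_left _ hx))⟩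
  · intro x hx
    have hSB : D.sub1 ∪ D.carrier ∪ ⋃ y ∈ D.sub1, ⋃ z ∈ D.carrier, lineThrough y z ⊆
        ⋃ q ∈ D.carrier, tangentSpace D.carrier q := by
      rintro p ((hp | hp) | hp)
      · exact D.carrier_subset_T ha hn (D.sub1_subset_carrier hp)
      · exact D.carrier_subset_T ha hn hp
      · simp only [Set.mem_iUnion] at hp
        obtain ⟨y, hy, z, hz, hline⟩ := hp
        exact D.chord1_mem_T ha hn hy hz hline
    have hSU : projSpan D.sub1 ∪ D.delta ∪
        ⋃ y ∈ projSpan D.sub1, ⋃ z ∈ D.delta, lineThrough y z ⊆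
        ⋃ q ∈ D.carrier, tangentSpace D.carrier q := by
      rintro p ((hp | hp) | hp)
      · exact D.A_mem_T ha hn hp
      · exact D.delta_mem_T ha hn hp
      · simp only [Set.mem_iUnion] at hp
        obtain ⟨y, hy, z, hz, hline⟩ := hp
        exact D.chord2_mem_T ha hn hy hz hline
    rcases hx with hB | hU
    · exact zcl_mono hSB hB
    · exact zcl_mono hSU hU


end SecantLoci
end
end
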